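/- arXiv:1210.2004 — 6 statements merged into one kernel-verified Lean document; each statement's English description precedes it below -/
import Mathlib

section
/- For the function Φ(q,p) = q log(q/p) - (q - p) for q,p > 0, with Φ(0,p) = p and Φ(q,0) = +∞ for q > 0: if 0 ≤ q' ≤ q and p' ≥ p > 0, writing q' = q(1-α) and p' = p(1+β) with α, β ≥ 0, then Φ(q',p') - Φ(q,p) ≤ -α Φ(q,p) + (α + β) p ≤ (α + β) p. -/
/-- The Poisson-type rate function Φ(q,p) = q log(q/p) - (q-p), with Φ(0,p) = p. -/
noncomputable def Phi (q p : ℝ) : ℝ := if q = 0 then p else q * Real.log (q / p) - (q - p)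

lemma Phi_nonneg (q p : ℝ) (hq : 0 ≤ q) (hp : 0 < p) : 0 ≤ Phi q p := by
  unfold Phi
  split
  · exact hp.le
  · rename_i h
    have hq0 : 0 < q := lt_of_le_of_ne hq (Ne.symm h)
    have h1 : Real.log (p / q) ≤ p / q - 1 := Real.log_le_sub_one_of_pos (div_pos hp hq0)
    have h2 : Real.log (q / p) = - Real.log (p / q) := by
      rw [← Real.log_inv, inv_div]
    have h3 : q * (p / q) = p := by field_simp
    nlinarith [mul_le_mul_of_nonneg_left h1 hq0.le]

theorem stmt0 (q q' p p' α β : ℝ) (hq' : 0 ≤ q') (hqq : q' ≤ q)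
    (hp : 0 < p) (hpp : p ≤ p') (hα : 0 ≤ α) (hβ : 0 ≤ β)
    (hq'eq : q' = q * (1 - α)) (hp'eq : p' = p * (1 + β)) :
    Phi q' p' - Phi q p ≤ -α * Phi q p + (α + β) * p ∧
      -α * Phi q p + (α + β) * p ≤ (α + β) * p := by
  have hp' : 0 < p' := lt_of_lt_of_le hp hpp
  have hPhinn : 0 ≤ Phi q p := Phi_nonneg q p (le_trans hq' hqq) hp
  refine ⟨?_, by nlinarith⟩
  rcases eq_or_lt_of_le (le_trans hq' hqq) with hq0 | hq0
  · -- q = 0, hence q' = 0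
    have hq0' : q = 0 := hq0.symm
    have hq'0 : q' = 0 := le_antisymm (hq0' ▸ hqq) hq'
    simp only [Phi, hq0', hq'0, if_true, ite_true]
    nlinarith
  · rcases eq_or_lt_of_le hq' with hq'0 | hq'0
    · -- q' = 0, so α = 1
      have hα1 : α = 1 := by
        have : q * (1 - α) = 0 := hq'eq ▸ hq'0.symm
        rcases mul_eq_zero.1 this with h | h
        · exact absurd h hq0.ne'
        · linarith
      have : Phi q' p' = p' := by simp [Phi, ← hq'0]
      rw [this, hα1, hp'eq]
      ring_nf
      nlinarith
    · -- q' > 0, main case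
      have h1α : 0 < 1 - α := by
        rcases lt_or_ge α 1 with h | h
        · linarith
        · nlinarith [hq'eq ▸ hq'0]
      have h1β : 0 < 1 + β := by linarith
      have hlogq' : Real.log (q' / p') = Real.log (q / p) +
          (Real.log (1 - α) - Real.log (1 + β)) := by
        rw [hq'eq, hp'eq, Real.log_div (by positivity) (by positivity),
          Real.log_div hq0.ne' hp.ne', Real.log_mul hq0.ne' h1α.ne',
          Real.log_mul hp.ne' h1β.ne']
        ring
      have hδ : Real.log (1 - α) - Real.log (1 + β) ≤ 0 := by
        have := Real.log_nonpos (by linarith) (by linarith : 1 - α ≤ 1)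
        have := Real.log_nonneg (by linarith : 1 ≤ 1 + β)
        linarith
      have e1 : Phi q' p' = q' * Real.log (q' / p') - (q' - p') := by
        simp [Phi, hq'0.ne']
      have e2 : Phi q p = q * Real.log (q / p) - (q - p) := by
        simp [Phi, hq0.ne']
      rw [e1, e2, hlogq', hq'eq, hp'eq]
      nlinarith [mul_nonpos_of_nonneg_of_nonpos (mul_nonneg hq0.le h1α.le) hδ]
end

section
/- Let π be a probability measure on a countable set V with π(x) > 0 for all x. Then there exists a decreasing function ψ : (0,1) → (0,∞) with lim_{s↓0} ψ(s) = +∞ and Σ_{x∈V} π(x) ψ(π(x)) < +∞. -/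
open Filter Topology
open scoped Classical

section aux
variable {V : Type*} {π : V → ℝ} {e : V → ℕ}

/-- cumulative mass at levels ≤ s -/
noncomputable def Gf (π : V → ℝ) (s : ℝ) : ℝ := ∑' z, if π z ≤ s then π z else 0

/-- mass strictly below x in the lex order (π, e), including x itself -/
noncomputable def hfn (π : V → ℝ) (e : V → ℕ) (x : V) : ℝ :=
  ∑' z, if (π z < π x ∨ (π z = π x ∧ e z ≤ e x)) then π z else 0

/-- same but excluding x -/
noncomputable def rfn (π : V → ℝ) (e : V → ℕ) (x : V) : ℝ :=
  ∑' z, if (z ≠ x ∧ (π z < π x ∨ (π z = π x ∧ e z ≤ e x))) then π z else 0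

lemma sum_ite (hpos : ∀ x, 0 < π x) (hπ : Summable π) (P : V → Prop) [DecidablePred P] :
    Summable (fun z => if P z then π z else 0) :=
  hπ.of_nonneg_of_le (fun z => by split_ifs <;> simp [(hpos z).le])
    (fun z => by split_ifs <;> simp [(hpos z).le])

lemma tsum_ite_mono (hpos : ∀ x, 0 < π x) (hπ : Summable π) {P Q : V → Prop}
    [DecidablePred P] [DecidablePred Q] (hPQ : ∀ z, P z → Q z) :
    (∑' z, if P z then π z else 0) ≤ ∑' z, if Q z then π z else 0 := by
  refine Summable.tsum_le_tsum (fun z => ?_) (sum_ite hpos hπ P) (sum_ite hpos hπ Q)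
  by_cases h : P z
  · rw [if_pos h, if_pos (hPQ z h)]
  · rw [if_neg h]
    split_ifs <;> simp [(hpos z).le]

lemma Gf_nonneg (hpos : ∀ x, 0 < π x) (s : ℝ) : 0 ≤ Gf π s :=
  tsum_nonneg (fun z => by split_ifs <;> simp [(hpos z).le])

lemma Gf_mono (hpos : ∀ x, 0 < π x) (hπ : Summable π) {s t : ℝ} (hst : s ≤ t) :
    Gf π s ≤ Gf π t := by
  unfold Gf
  exact tsum_ite_mono hpos hπ (fun z hz => hz.trans hst)

lemma Gf_le_total (hpos : ∀ x, 0 < π x) (hπ : Summable π) (s : ℝ) :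
    Gf π s ≤ ∑' z, π z := by
  refine Summable.tsum_le_tsum (fun z => ?_) (sum_ite hpos hπ _) hπ
  split_ifs <;> simp [(hpos z).le]

lemma hfn_eq (hpos : ∀ x, 0 < π x) (hπ : Summable π) (x : V) :
    hfn π e x = π x + rfn π e x := by
  have key := Summable.tsum_eq_add_tsum_ite
    (f := fun z => if (π z < π x ∨ (π z = π x ∧ e z ≤ e x)) then π z else 0)
    (sum_ite hpos hπ _) x
  rw [if_pos (by simp)] at key
  rw [hfn, key]
  congr 1
  refine tsum_congr (fun z => ?_)
  by_cases hz : z = x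
  · simp [hz]
  · simp only [if_neg hz, rfn]
    by_cases h : (π z < π x ∨ (π z = π x ∧ e z ≤ e x))
    · rw [if_pos h, if_pos ⟨hz, h⟩]
    · rw [if_neg h, if_neg (fun hc => h hc.2)]

lemma rfn_nonneg (hpos : ∀ x, 0 < π x) (x : V) : 0 ≤ rfn π e x :=
  tsum_nonneg (fun z => by split_ifs <;> simp [(hpos z).le])

lemma pi_le_hfn (hpos : ∀ x, 0 < π x) (hπ : Summable π) (x : V) : π x ≤ hfn π e x := by
  rw [hfn_eq hpos hπ x]
  linarith [rfn_nonneg (e := e) hpos x]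

lemma hfn_le_Gf (hpos : ∀ x, 0 < π x) (hπ : Summable π) (x : V) :
    hfn π e x ≤ Gf π (π x) := by
  unfold hfn Gf
  exact tsum_ite_mono hpos hπ (fun z hz => by rcases hz with h | h; exacts [h.le, h.1.le])

lemma rfn_le_hfn (hpos : ∀ x, 0 < π x) (hπ : Summable π) (x : V) :
    rfn π e x ≤ hfn π e x := by
  unfold rfn hfn
  exact tsum_ite_mono hpos hπ (fun z hz => hz.2)

/-- disjointness: if x is lex-below y then the whole initial block of x fits below y's own mass -/
lemma hfn_le_rfn (hpos : ∀ x, 0 < π x) (hπ : Summable π) {x y : V}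
    (hlt : π x < π y ∨ (π x = π y ∧ e x < e y)) :
    hfn π e x ≤ rfn π e y := by
  unfold hfn rfn
  refine tsum_ite_mono hpos hπ (fun z hz => ?_)
  rcases hlt with h | ⟨hxy, hexy⟩
  · have hzx : π z ≤ π x := by rcases hz with h' | h'; exacts [h'.le, h'.1.le]
    have : π z < π y := lt_of_le_of_lt hzx h
    exact ⟨fun hzy => by simp [hzy] at this, Or.inl this⟩
  · rcases hz with h' | ⟨h1, h2⟩
    · have : π z < π y := hxy ▸ h'
      exact ⟨fun hzy => by simp [hzy] at this, Or.inl this⟩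
    · have hez : e z < e y := lt_of_le_of_lt h2 hexy
      exact ⟨fun hzy => by simp [hzy] at hez, Or.inr ⟨hxy ▸ h1, hez.le⟩⟩

lemma disjointness (hpos : ∀ x, 0 < π x) (hπ : Summable π) (he : Function.Injective e)
    {x y : V} (hxy : x ≠ y) :
    hfn π e x ≤ rfn π e y ∨ hfn π e y ≤ rfn π e x := by
  rcases lt_trichotomy (π x) (π y) with h | h | h
  · exact Or.inl (hfn_le_rfn hpos hπ (Or.inl h))
  · rcases lt_trichotomy (e x) (e y) with h' | h' | h'
    · exact Or.inl (hfn_le_rfn hpos hπ (Or.inr ⟨h, h'⟩))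
    · exact absurd (he h') hxy
    · exact Or.inr (hfn_le_rfn hpos hπ (Or.inr ⟨h.symm, h'⟩))
  · exact Or.inr (hfn_le_rfn hpos hπ (Or.inl h))

lemma finset_bound (hpos : ∀ x, 0 < π x) (hπ : Summable π) (he : Function.Injective e) :
    ∀ F : Finset V, ∀ B : ℝ, 0 ≤ B → (∀ x ∈ F, hfn π e x ≤ B) →
      ∑ x ∈ F, (Real.sqrt (hfn π e x) - Real.sqrt (rfn π e x)) ≤ Real.sqrt B := by
  intro F
  induction F using Finset.strongInduction with
  | _ F ih =>
    intro B hB hFB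
    rcases F.eq_empty_or_nonempty with rfl | hne
    · simpa using Real.sqrt_nonneg B
    · obtain ⟨x₀, hx₀F, hx₀max⟩ := F.exists_max_image (hfn π e) hne
      have herase : ∀ y ∈ F.erase x₀, hfn π e y ≤ rfn π e x₀ := by
        intro y hy
        have hyF := Finset.mem_of_mem_erase hy
        have hyne : y ≠ x₀ := Finset.ne_of_mem_erase hy
        rcases disjointness hpos hπ he hyne with h | h
        · exact h
        · exfalso
          have h1 : hfn π e x₀ ≤ rfn π e y := h
          have h2 : rfn π e y < hfn π e y := by
            rw [hfn_eq hpos hπ y]; linarith [hpos y]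
          have h3 : hfn π e y ≤ hfn π e x₀ := hx₀max y hyF
          linarith
      have hr0 : 0 ≤ rfn π e x₀ := rfn_nonneg hpos x₀
      have IH := ih (F.erase x₀) (Finset.erase_ssubset hx₀F) (rfn π e x₀) hr0 herase
      have hsum := Finset.add_sum_erase F
        (fun x => Real.sqrt (hfn π e x) - Real.sqrt (rfn π e x)) hx₀F
      have hle : Real.sqrt (hfn π e x₀) ≤ Real.sqrt B :=
        Real.sqrt_le_sqrt (hFB x₀ hx₀F)
      calc ∑ x ∈ F, (Real.sqrt (hfn π e x) - Real.sqrt (rfn π e x))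
          = (Real.sqrt (hfn π e x₀) - Real.sqrt (rfn π e x₀)) +
            ∑ x ∈ F.erase x₀, (Real.sqrt (hfn π e x) - Real.sqrt (rfn π e x)) := hsum.symm
        _ ≤ (Real.sqrt (hfn π e x₀) - Real.sqrt (rfn π e x₀)) + Real.sqrt (rfn π e x₀) := by
            linarith
        _ = Real.sqrt (hfn π e x₀) := by ring
        _ ≤ Real.sqrt B := hle

end aux

theorem stmt4 {V : Type*} [Countable V] (π : V → ℝ)
    (hpos : ∀ x, 0 < π x) (hsum : HasSum π 1) :
    ∃ ψ : ℝ → ℝ,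
      (∀ s ∈ Set.Ioo (0:ℝ) 1, 0 < ψ s) ∧
      AntitoneOn ψ (Set.Ioo (0:ℝ) 1) ∧
      Filter.Tendsto ψ (nhdsWithin 0 (Set.Ioi 0)) Filter.atTop ∧
      Summable (fun x => π x * ψ (π x)) := by
  obtain ⟨e, he⟩ := Countable.exists_injective_nat V
  have hπ : Summable π := hsum.summable
  have htot : ∑' z, π z = 1 := hsum.tsum_eq
  set ψ : ℝ → ℝ := fun s => (Real.sqrt (Gf π s + s))⁻¹ with hψ
  have hGpos : ∀ s > (0:ℝ), 0 < Gf π s + s := fun s hs =>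
    add_pos_of_nonneg_of_pos (Gf_nonneg hpos s) hs
  refine ⟨ψ, ?_, ?_, ?_, ?_⟩
  · intro s hs
    exact inv_pos.mpr (Real.sqrt_pos.mpr (hGpos s hs.1))
  · intro s hs t ht hst
    have h1 : Gf π s + s ≤ Gf π t + t := add_le_add (Gf_mono hpos hπ hst) hst
    have h2 : 0 < Real.sqrt (Gf π s + s) := Real.sqrt_pos.mpr (hGpos s hs.1)
    exact inv_anti₀ h2 (Real.sqrt_le_sqrt h1)
  · -- tendsto
    have hG0 : Tendsto (fun s => Gf π s) (nhdsWithin 0 (Set.Ioi 0)) (𝓝 0) := by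
      have := tendsto_tsum_of_dominated_convergence (𝓕 := nhdsWithin (0:ℝ) (Set.Ioi 0))
        (f := fun s z => if π z ≤ s then π z else 0) (g := fun _ => (0:ℝ))
        (bound := π) hπ ?_ ?_
      · simpa [Gf] using this
      · intro z
        have hev : (fun s => if π z ≤ s then π z else 0)
            =ᶠ[nhdsWithin (0:ℝ) (Set.Ioi 0)] (fun _ => (0:ℝ)) := by
          filter_upwards [Ioo_mem_nhdsGT_of_mem ⟨le_refl (0:ℝ), hpos z⟩] with s hs
          rw [if_neg (not_le.mpr hs.2)]
        exact Tendsto.congr' hev.symm tendsto_const_nhds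
      · filter_upwards with s z
        rw [Real.norm_eq_abs]
        split_ifs <;> simp [abs_of_nonneg (hpos z).le, (hpos z).le]
    have hGs0 : Tendsto (fun s => Gf π s + s) (nhdsWithin 0 (Set.Ioi 0)) (𝓝 0) := by
      have := hG0.add (tendsto_id.mono_left nhdsWithin_le_nhds)
      simpa using this
    have hsq : Tendsto (fun s => Real.sqrt (Gf π s + s)) (nhdsWithin 0 (Set.Ioi 0))
        (nhdsWithin 0 (Set.Ioi 0)) := by
      apply tendsto_nhdsWithin_of_tendsto_nhds_of_eventually_within
      · have := (Real.continuous_sqrt.tendsto 0).comp hGs0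
        simpa [Function.comp_def] using this
      · filter_upwards [self_mem_nhdsWithin] with s hs
        exact Real.sqrt_pos.mpr (hGpos s hs)
    exact tendsto_inv_nhdsGT_zero.comp hsq
  · -- summability
    set g : V → ℝ := fun x => 2 * (Real.sqrt (hfn π e x) - Real.sqrt (rfn π e x)) with hg
    have hg_nonneg : ∀ x, 0 ≤ g x := by
      intro x
      have := Real.sqrt_le_sqrt (rfn_le_hfn (e := e) hpos hπ x)
      simp only [hg]; linarith
    have hg_summable : Summable g := by
      have : Summable (fun x => Real.sqrt (hfn π e x) - Real.sqrt (rfn π e x)) := by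
        refine summable_of_sum_le (c := Real.sqrt 1) (Pi.le_def.mpr fun x => ?_) ?_
        · have := Real.sqrt_le_sqrt (rfn_le_hfn (e := e) hpos hπ x)
          simp only [Pi.zero_apply]
          linarith
        · intro u
          refine finset_bound hpos hπ he u 1 zero_le_one (fun x _ => ?_)
          calc hfn π e x ≤ Gf π (π x) := hfn_le_Gf hpos hπ x
            _ ≤ ∑' z, π z := Gf_le_total hpos hπ (π x)
            _ = 1 := htot
      simpa [hg] using this.mul_left 2
    refine Summable.of_nonneg_of_le (fun x => ?_) (fun x => ?_) hg_summable
    · exact mul_nonneg (hpos x).le (inv_nonneg.mpr (Real.sqrt_nonneg _))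
    · -- key inequality
      have ha : 0 < π x := hpos x
      have hb : π x ≤ hfn π e x := pi_le_hfn hpos hπ x
      have hbg : hfn π e x ≤ Gf π (π x) := hfn_le_Gf hpos hπ x
      have hr0 : 0 ≤ rfn π e x := rfn_nonneg hpos x
      have hrb : rfn π e x ≤ hfn π e x := rfn_le_hfn hpos hπ x
      have hrg : rfn π e x ≤ Gf π (π x) := hrb.trans hbg
      have hgpos : 0 < Gf π (π x) := lt_of_lt_of_le ha (hb.trans hbg)
      set sb := Real.sqrt (hfn π e x)
      set sr := Real.sqrt (rfn π e x)
      set sg := Real.sqrt (Gf π (π x))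
      set sga := Real.sqrt (Gf π (π x) + π x)
      have hsgpos : 0 < sg := Real.sqrt_pos.mpr hgpos
      have hsga : sg ≤ sga := Real.sqrt_le_sqrt (by linarith)
      have hsgapos : 0 < sga := lt_of_lt_of_le hsgpos hsga
      have hsb_le : sb ≤ sg := Real.sqrt_le_sqrt hbg
      have hsr_le : sr ≤ sg := Real.sqrt_le_sqrt hrg
      have hsr_nonneg : 0 ≤ sr := Real.sqrt_nonneg _
      have hmul : sb * sb - sr * sr = π x := by
        rw [Real.mul_self_sqrt (ha.le.trans hb), Real.mul_self_sqrt hr0,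
          hfn_eq hpos hπ x]; ring
      have hsb_sr : sr ≤ sb := Real.sqrt_le_sqrt hrb
      have key : π x * sg⁻¹ ≤ 2 * (sb - sr) := by
        have h1 : π x = (sb - sr) * (sb + sr) := by rw [← hmul]; ring
        have h2 : sb + sr ≤ 2 * sg := by linarith
        have h4 : (sb - sr) * (sb + sr) ≤ (sb - sr) * (2 * sg) :=
          mul_le_mul_of_nonneg_left h2 (by linarith)
        rw [← div_eq_mul_inv, div_le_iff₀ hsgpos]
        nlinarith [h1, h4]
      have hinv : sga⁻¹ ≤ sg⁻¹ := inv_anti₀ hsgpos hsga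
      calc π x * ψ (π x) = π x * sga⁻¹ := rfl
        _ ≤ π x * sg⁻¹ := by
            exact mul_le_mul_of_nonneg_left hinv ha.le
        _ ≤ 2 * (sb - sr) := key
        _ = g x := rfl
end

section
/- Let (V,E) be a countable oriented graph and Q ∈ ℓ¹₊(E) a summable nonnegative flow with Q(y,z) > 0 for every (y,z) ∈ E and zero divergence, i.e. for every vertex y, Σ_{z:(y,z)∈E} Q(y,z) = Σ_{z:(z,y)∈E} Q(z,y). Then the oriented graph (V,E) is strongly connected (every vertex reachable from every other by directed paths) if and only if its underlying unoriented graph is connected. -/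
theorem stmt5 {V : Type*} [Countable V] (E : V → V → Prop)
    (hloop : ∀ y, ¬ E y y)
    (Q : V → V → ℝ)
    (hpos : ∀ y z, E y z → 0 < Q y z)
    (hzero : ∀ y z, ¬ E y z → Q y z = 0)
    (hsum : Summable (fun p : V × V => Q p.1 p.2))
    (hdiv : ∀ y, ∑' z, Q y z = ∑' z, Q z y) :
    (∀ y z : V, Relation.ReflTransGen E y z) ↔
      (∀ y z : V, Relation.ReflTransGen (fun a b => E a b ∨ E b a) y z) := by
  have hQnn : ∀ a b, 0 ≤ Q a b := by
    intro a b
    by_cases h : E a b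
    · exact (hpos a b h).le
    · exact (hzero a b h).ge
  have key : ∀ y z, E y z → Relation.ReflTransGen E z y := by
    intro y z hyz
    by_contra hny
    set S : Set V := {w | Relation.ReflTransGen E z w} with hSdef
    have hyS : y ∉ S := hny
    have hzS : z ∈ S := Relation.ReflTransGen.refl
    have hclosed : ∀ a ∈ S, ∀ b, E a b → b ∈ S := fun a ha b hab => ha.tail hab
    have hQz : ∀ a ∈ S, ∀ b, b ∉ S → Q a b = 0 := fun a ha b hb =>
      hzero a b (fun h => hb (hclosed a ha b h))
    -- summability facts
    have hrow : ∀ a, Summable (fun b => Q a b) := fun a => hsum.prod_factor a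
    have hswap : Summable (fun p : V × V => Q p.2 p.1) := hsum.prod_symm
    have hcol : ∀ a, Summable (fun b => Q b a) := fun a => hswap.prod_factor a
    -- F : sums over S×S of Q b w ; G : over S×Sᶜ
    have hFsum : Summable (fun p : (↥S × ↥S) => Q (p.2 : V) (p.1 : V)) := by
      have : Function.Injective (fun p : (↥S × ↥S) => (((p.2 : V), (p.1 : V)) : V × V)) := by
        intro p q h
        simp only [Prod.mk.injEq] at h
        exact Prod.ext (Subtype.ext h.2) (Subtype.ext h.1)
      exact hsum.comp_injective this
    have hGsum : Summable (fun p : (↥S × ↥(Sᶜ)) => Q (p.2 : V) (p.1 : V)) := by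
      have : Function.Injective (fun p : (↥S × ↥(Sᶜ)) => (((p.2 : V), (p.1 : V)) : V × V)) := by
        intro p q h
        simp only [Prod.mk.injEq] at h
        exact Prod.ext (Subtype.ext h.2) (Subtype.ext h.1)
      exact hsum.comp_injective this
    have hf : Summable (fun w : ↥S => ∑' b : ↥S, Q (b : V) (w : V)) := hFsum.prod
    have hg : Summable (fun w : ↥S => ∑' b : ↥(Sᶜ), Q (b : V) (w : V)) := hGsum.prod
    -- sum over S of row sums = sum over S of col sums
    have h1 : ∑' w : ↥S, ∑' b, Q (w : V) b = ∑' w : ↥S, ∑' b, Q b (w : V) :=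
      tsum_congr fun w => hdiv (w : V)
    -- row sums supported in S
    have h2 : ∀ w : ↥S, ∑' b, Q (w : V) b = ∑' b : ↥S, Q (w : V) (b : V) := by
      intro w
      refine (tsum_subtype_eq_of_support_subset ?_).symm
      intro b hb
      by_contra hbS
      exact hb (hQz _ w.2 b hbS)
    -- col sums split
    have h3 : ∀ w : ↥S, ∑' b, Q b (w : V)
        = (∑' b : ↥S, Q (b : V) (w : V)) + ∑' b : ↥(Sᶜ), Q (b : V) (w : V) := by
      intro w
      exact (Summable.tsum_add_tsum_compl ((hcol (w : V)).subtype S) ((hcol (w : V)).subtype Sᶜ)).symm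
    rw [tsum_congr h2, tsum_congr h3, Summable.tsum_add hf hg] at h1
    -- Fubini on S×S
    have hFsum' : Summable (Function.uncurry fun (w b : ↥S) => Q (b : V) (w : V)) := by
      exact hFsum
    have h4 : ∑' w : ↥S, ∑' b : ↥S, Q (w : V) (b : V)
        = ∑' w : ↥S, ∑' b : ↥S, Q (b : V) (w : V) :=
      Summable.tsum_comm (f := fun (w b : ↥S) => Q (b : V) (w : V)) hFsum' 
    rw [h4] at h1
    have h5 : ∑' w : ↥S, ∑' b : ↥(Sᶜ), Q (b : V) (w : V) = 0 := (left_eq_add.mp h1).symm ▸ rfl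
    have h6 : ∑' b : ↥(Sᶜ), Q (b : V) (z : V) = 0 := by
      have hle := Summable.le_tsum hg ⟨z, hzS⟩ (fun j _ => tsum_nonneg (fun b => hQnn _ _))
      have hge : (0:ℝ) ≤ ∑' b : ↥(Sᶜ), Q (b : V) (z : V) := tsum_nonneg (fun b => hQnn _ _)
      rw [h5] at hle
      exact le_antisymm hle hge
    have h7 : Q y z = 0 := by
      have hle := Summable.le_tsum (hGsum.prod_factor ⟨z, hzS⟩) ⟨y, hyS⟩ (fun j _ => hQnn _ _)
      rw [h6] at hle
      exact le_antisymm hle (hQnn y z)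
    exact absurd h7 (hpos y z hyz).ne'
  constructor
  · intro h y z
    exact Relation.ReflTransGen.mono (fun a b hab => Or.inl hab) _ _ (h y z)
  · intro h y z
    have hyz := h y z
    induction hyz with
    | refl => exact Relation.ReflTransGen.refl
    | tail _ hbc ih =>
      cases hbc with
      | inl h1 => exact ih.tail h1
      | inr h2 => exact ih.trans (key _ _ h2)
end

section
/- Let Q ∈ ℝ₊^E be a nonnegative flow on a countable oriented graph with zero divergence and zero flux towards infinity (there is an invading sequence V_n ↗ V of finite vertex sets with Σ_{y∈V_n, z∉V_n} Q(y,z) → 0). Then Q admits a cyclic decomposition: there exist nonnegative constants Q̂(C) indexed by the countable set 𝒞 of self-avoiding finite directed cycles in (V,E) such that Q(y,z) = Σ_{C∈𝒞 : (y,z)∈C} Q̂(C) for every (y,z) ∈ E. -/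
/-- A self-avoiding finite directed cycle in the oriented graph with edge relation `E`:
a nonempty list of pairwise distinct vertices whose consecutive pairs (cyclically)
are edges of the graph. -/
def IsSACycle {V : Type*} (E : V → V → Prop) (l : List V) : Prop :=
  l ≠ [] ∧ l.Nodup ∧ ∀ p ∈ l.zip (l.rotate 1), E p.1 p.2

open List Filter
open scoped ENNReal

set_option linter.unusedSectionVars false
set_option linter.unusedVariables false

section Helpers

variable {V : Type*} [DecidableEq V]

lemma zip_fst_unique {l₁ l₂ : List V} (hlen : l₂.length = l₁.length) (hn : l₁.Nodup)
    {y : V} (hy : y ∈ l₁) : ∃ z₀, ∀ z, ((y, z) ∈ l₁.zip l₂ ↔ z = z₀) := by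
  obtain ⟨i, hi, hiy⟩ := mem_iff_getElem.1 hy
  refine ⟨l₂[i]'(hlen ▸ hi), fun z => ⟨fun hz => ?_, fun hz => ?_⟩⟩
  · obtain ⟨j, hj, hjz⟩ := mem_iff_getElem.1 hz
    rw [length_zip, hlen, min_self] at hj
    rw [getElem_zip] at hjz
    have h1 : l₁[j] = y := congrArg Prod.fst hjz
    have h2 : l₂[j]'(hlen ▸ hj) = z := congrArg Prod.snd hjz
    have : j = i := by
      exact hn.getElem_inj_iff.1 (h1.trans hiy.symm)
    subst this; exact h2.symm
  · subst hz
    have : (l₁.zip l₂)[i]'(by rw [length_zip, hlen, min_self]; exact hi) = (y, l₂[i]'(hlen ▸ hi)) := by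
      rw [getElem_zip, hiy]
    exact this ▸ getElem_mem _

lemma zip_snd_unique {l₁ l₂ : List V} (hlen : l₂.length = l₁.length) (hn : l₂.Nodup)
    {y : V} (hy : y ∈ l₂) : ∃ x₀, ∀ x, ((x, y) ∈ l₁.zip l₂ ↔ x = x₀) := by
  obtain ⟨i, hi, hiy⟩ := mem_iff_getElem.1 hy
  refine ⟨l₁[i]'(hlen ▸ hi), fun x => ⟨fun hx => ?_, fun hx => ?_⟩⟩
  · obtain ⟨j, hj, hjz⟩ := mem_iff_getElem.1 hx
    rw [length_zip, hlen, min_self] at hj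
    rw [getElem_zip] at hjz
    have h1 : l₁[j]'(hlen ▸ hj) = x := congrArg Prod.fst hjz
    have h2 : l₂[j] = y := congrArg Prod.snd hjz
    have : j = i := hn.getElem_inj_iff.1 (h2.trans hiy.symm)
    subst this; exact h1.symm
  · subst hx
    have : (l₁.zip l₂)[i]'(by rw [length_zip, hlen, min_self]; exact hlen ▸ hi) =
        (l₁[i]'(hlen ▸ hi), y) := by rw [getElem_zip, hiy]
    exact this ▸ getElem_mem _

lemma mem_zip_fst {l₁ l₂ : List V} {p : V × V} (h : p ∈ l₁.zip l₂) : p.1 ∈ l₁ :=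
  (List.of_mem_zip h).1

lemma mem_zip_snd {l₁ l₂ : List V} {p : V × V} (h : p ∈ l₁.zip l₂) : p.2 ∈ l₂ :=
  (List.of_mem_zip h).2

open scoped ENNReal

lemma tsum_ite_out {l : List V} (hn : l.Nodup) (y : V) (w : ℝ≥0∞) :
    ∑' z, (if (y, z) ∈ l.zip (l.rotate 1) then w else 0) = if y ∈ l then w else 0 := by
  by_cases hy : y ∈ l
  · obtain ⟨z₀, hz₀⟩ := zip_fst_unique (l.length_rotate 1) hn hy
    rw [if_pos hy]
    calc ∑' z, (if (y, z) ∈ l.zip (l.rotate 1) then w else 0)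
        = ∑' z, (if z = z₀ then w else 0) := by
          exact tsum_congr fun z => if_congr (hz₀ z) rfl rfl
      _ = w := tsum_ite_eq z₀ (fun _ => w)
  · rw [if_neg hy]
    convert tsum_zero with z
    rw [if_neg fun hmem => hy (mem_zip_fst hmem)]

lemma tsum_ite_in {l : List V} (hn : l.Nodup) (y : V) (w : ℝ≥0∞) :
    ∑' x, (if (x, y) ∈ l.zip (l.rotate 1) then w else 0) = if y ∈ l then w else 0 := by
  have hn' : (l.rotate 1).Nodup := ((l.rotate_perm 1).nodup_iff).2 hn
  by_cases hy : y ∈ l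
  · have hy' : y ∈ l.rotate 1 := ((l.rotate_perm 1).mem_iff).2 hy
    obtain ⟨x₀, hx₀⟩ := zip_snd_unique (l.length_rotate 1) hn' hy'
    rw [if_pos hy]
    calc ∑' x, (if (x, y) ∈ l.zip (l.rotate 1) then w else 0)
        = ∑' x, (if x = x₀ then w else 0) := tsum_congr fun x => if_congr (hx₀ x) rfl rfl
      _ = w := tsum_ite_eq x₀ (fun _ => w)
  · rw [if_neg hy]
    convert tsum_zero with x
    rw [if_neg fun hmem => hy (((l.rotate_perm 1).mem_iff).1 (mem_zip_snd hmem))]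

lemma exists_nodup_path {r : V → V → Prop} {b a : V} (h : Relation.ReflTransGen r b a) :
    ∃ m : List V, m.Chain' r ∧ m.Nodup ∧ m.head? = some b ∧ m.getLast? = some a := by
  induction h with
  | refl => exact ⟨[b], isChain_singleton b, nodup_singleton b, rfl, rfl⟩
  | @tail c a hbc hca ih =>
    obtain ⟨m, hchain, hnodup, hhead, hlast⟩ := ih
    by_cases ha : a ∈ m
    · refine ⟨m.take (m.idxOf a + 1), hchain.take _, hnodup.sublist (take_sublist _ _), ?_, ?_⟩
      · have hm : m ≠ [] := by rintro rfl; simp at hhead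
        rw [← hhead]
        cases m with
        | nil => simp at hhead
        | cons x t => simp
      · have hi : m.idxOf a < m.length := idxOf_lt_length_iff.2 ha
        have hlen : (m.take (m.idxOf a + 1)).length = m.idxOf a + 1 := by
          rw [length_take]; omega
        rw [getLast?_eq_getElem?, hlen]
        simp only [Nat.add_sub_cancel]
        rw [getElem?_eq_getElem (by omega)]
        congr 1
        rw [getElem_take]
        exact getElem_idxOf hi
    · have hm : m ≠ [] := by rintro rfl; simp at hhead
      refine ⟨m ++ [a], ?_, ?_, ?_, by simp⟩
      · rw [show Chain' r (m ++ [a]) = IsChain r (m ++ [a]) from rfl, isChain_append]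
        refine ⟨hchain, isChain_singleton a, fun x hx y hy => ?_⟩
        rw [hlast] at hx
        simp at hx hy
        cases hx; cases hy; exact hca
      · rw [nodup_append]
        exact ⟨hnodup, nodup_singleton a, fun x hx y hy h => ha (by rw [mem_singleton] at hy; rw [← hy, ← h]; exact hx)⟩
      · rw [head?_append_of_ne_nil _ hm]
        exact hhead

lemma exists_cycle_of_reach {E : V → V → Prop} (hloop : ∀ y, ¬ E y y) {r : V → V → Prop}
    (hrE : ∀ u v, r u v → E u v) {a b : V} (hr : r a b)
    (hreach : Relation.ReflTransGen r b a) :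
    ∃ l : List V, IsSACycle E l ∧ (a, b) ∈ l.zip (l.rotate 1) ∧
      ∀ p ∈ l.zip (l.rotate 1), r p.1 p.2 := by
  obtain ⟨m, hchain, hnodup, hhead, hlast⟩ := exists_nodup_path hreach
  have hm : m ≠ [] := by rintro rfl; simp at hhead
  have hmdecomp : m.dropLast ++ [a] = m := dropLast_append_getLast? a hlast
  have hheadm : b :: m.tail = m := by
    have h1 := cons_head_tail hm
    rw [head?_eq_head hm, Option.some_inj] at hhead
    rwa [hhead] at h1
  set L := a :: m.dropLast with hL
  have hrot : L.rotate 1 = m := by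
    rw [hL, rotate_cons_succ, rotate_zero, hmdecomp]
  have hanotin : a ∉ m.dropLast := by
    intro hmem
    have := hnodup
    rw [← hmdecomp, nodup_append] at this
    exact this.2.2 a hmem a (mem_singleton_self a) rfl
  have hzip : L.zip (L.rotate 1) = (a, b) :: m.dropLast.zip m.tail := by
    rw [hrot]
    conv_lhs => rw [← hheadm]
    rfl
  have hedge : ∀ p ∈ m.dropLast.zip m.tail, r p.1 p.2 := by
    intro p hp
    obtain ⟨j, hj, hjp⟩ := mem_iff_getElem.1 hp
    rw [length_zip, length_dropLast, length_tail, min_self] at hj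
    rw [getElem_zip] at hjp
    have h1 : m.dropLast[j]'(by rw [length_dropLast]; omega) = p.1 := congrArg Prod.fst hjp
    have h2 : m.tail[j]'(by rw [length_tail]; omega) = p.2 := congrArg Prod.snd hjp
    rw [getElem_dropLast] at h1
    rw [getElem_tail] at h2
    have := isChain_iff_getElem.1 hchain j (by omega)
    rw [← h1, ← h2]
    convert this using 2
  refine ⟨L, ⟨cons_ne_nil _ _, ?_, ?_⟩, ?_, ?_⟩
  · rw [nodup_cons]
    exact ⟨hanotin, hnodup.sublist (dropLast_sublist m)⟩
  · intro p hp
    rw [hzip] at hp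
    rcases mem_cons.1 hp with h | h
    · rw [h]; exact hrE a b hr
    · exact hrE _ _ (hedge p h)
  · rw [hzip]; exact mem_cons_self
  · intro p hp
    rw [hzip] at hp
    rcases mem_cons.1 hp with h | h
    · rw [h]; exact hr
    · exact hedge p h

lemma tsum_split (f : V → ℝ≥0∞) (A : Finset V) :
    ∑' z, f z = ∑ v ∈ A, f v + ∑' z, (if z ∈ A then 0 else f z) := by
  have h : ∀ z, f z = (if z ∈ A then f z else 0) + (if z ∈ A then 0 else f z) := by
    intro z; by_cases hz : z ∈ A <;> simp [hz]
  rw [tsum_congr h, ENNReal.tsum_add]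
  congr 1
  rw [tsum_eq_sum (s := A) (fun b hb => by simp [hb])]
  exact Finset.sum_congr rfl fun v hv => by simp [hv]

lemma no_reach_contra {P Q' : V → V → ℝ≥0∞}
    (hPQ : ∀ u v, P u v ≤ Q' u v) (hQfin : ∀ u v, Q' u v ≠ ⊤)
    (hrowfin : ∀ y, ∑' z, Q' y z ≠ ⊤)
    (hPdiv : ∀ y, ∑' z, P y z = ∑' z, P z y)
    (Vn : ℕ → Finset V) (hmono : Monotone Vn)
    (hflux : Tendsto (fun n => ∑ y ∈ Vn n, ∑' z, (if z ∈ Vn n then 0 else Q' y z))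
      atTop (nhds 0))
    {a b : V} (hab : 0 < P a b) {n₀ : ℕ} (hb : b ∈ Vn n₀)
    (hnr : a ∉ {v | Relation.ReflTransGen (fun u v => 0 < P u v) b v}) : False := by
  classical
  set r : V → V → Prop := fun u v => 0 < P u v with hr
  set Reach : Set V := {v | Relation.ReflTransGen r b v} with hReach
  have key : ∀ n, b ∈ Vn n →
      P a b ≤ ∑ y ∈ Vn n, ∑' z, (if z ∈ Vn n then 0 else Q' y z) := by
    intro n hbn
    set A : Finset V := (Vn n).filter (· ∈ Reach) with hA
    have hbA : b ∈ A := by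
      rw [hA, Finset.mem_filter]
      exact ⟨hbn, Relation.ReflTransGen.refl⟩
    have haA : a ∉ A := fun h => hnr (Finset.mem_filter.1 h).2
    have hdivA : ∑ u ∈ A, ∑' z, P u z = ∑ u ∈ A, ∑' z, P z u :=
      Finset.sum_congr rfl fun u _ => hPdiv u
    rw [Finset.sum_congr rfl (fun u _ => tsum_split (fun z => P u z) A),
        Finset.sum_congr (M := ℝ≥0∞) rfl (fun u (_ : u ∈ A) => tsum_split (fun z => P z u) A),
        Finset.sum_add_distrib, Finset.sum_add_distrib] at hdivA
    have hint : ∑ u ∈ A, ∑ v ∈ A, P v u = ∑ u ∈ A, ∑ v ∈ A, P u v := Finset.sum_comm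
    rw [hint] at hdivA
    have hfin : ∑ u ∈ A, ∑ v ∈ A, P u v ≠ ⊤ := by
      refine (ENNReal.sum_lt_top.2 fun u _ => (ENNReal.sum_lt_top.2 fun v _ => ?_)).ne
      exact lt_of_le_of_lt (hPQ u v) (lt_top_iff_ne_top.2 (hQfin u v))
    have hOI : ∑ u ∈ A, ∑' z, (if z ∈ A then 0 else P u z)
        = ∑ u ∈ A, ∑' z, (if z ∈ A then 0 else P z u) :=
      (ENNReal.add_right_inj hfin).1 hdivA
    have hIN : P a b ≤ ∑ u ∈ A, ∑' z, (if z ∈ A then 0 else P z u) := by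
      refine le_trans ?_ (Finset.single_le_sum (f := fun u => ∑' z, (if z ∈ A then 0 else P z u))
        (fun _ _ => zero_le) hbA)
      refine le_trans ?_ (ENNReal.le_tsum a)
      rw [if_neg haA]
    have hOUT : ∑ u ∈ A, ∑' z, (if z ∈ A then 0 else P u z)
        ≤ ∑ y ∈ Vn n, ∑' z, (if z ∈ Vn n then 0 else Q' y z) := by
      refine le_trans (Finset.sum_le_sum ?_) (Finset.sum_le_sum_of_subset
        (Finset.filter_subset _ _))
      intro u hu
      refine ENNReal.tsum_le_tsum fun z => ?_
      by_cases hzA : z ∈ A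
      · simp [hzA]
      by_cases hzV : z ∈ Vn n
      · have hzR : z ∉ Reach := fun h => hzA (Finset.mem_filter.2 ⟨hzV, h⟩)
        have hPz : P u z = 0 := by
          by_contra hne
          exact hzR (Relation.ReflTransGen.tail (Finset.mem_filter.1 hu).2
            (pos_iff_ne_zero.2 hne))
        simp [hzA, hPz]
      · simp only [if_neg hzA, if_neg hzV]
        exact hPQ u z
    exact hIN.trans (hOI ▸ hOUT)
  have hle : P a b ≤ 0 := by
    refine ge_of_tendsto hflux ?_
    filter_upwards [eventually_ge_atTop n₀] with n hn
    exact key n (hmono hn hb)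
  exact absurd hle (not_le.2 hab)

lemma finset_sum_iSup_chain {ι κ : Type*} [Nonempty κ] {g : κ → ι → ℝ≥0∞}
    (hdir : ∀ i j : κ, ∃ k, g i ≤ g k ∧ g j ≤ g k) (F : Finset ι) :
    ∑ x ∈ F, ⨆ k, g k x = ⨆ k, ∑ x ∈ F, g k x := by
  classical
  induction F using Finset.induction with
  | empty => simp
  | @insert a F ha ih =>
    rw [Finset.sum_insert ha, ih, ENNReal.iSup_add_iSup]
    · exact iSup_congr fun k => (Finset.sum_insert ha).symm
    · intro i j
      obtain ⟨k, hik, hjk⟩ := hdir i j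
      exact ⟨k, add_le_add (hik a) (Finset.sum_le_sum fun x _ => hjk x)⟩

lemma tsum_sub' {V : Type*} {f g : V → ℝ≥0∞} (hle : ∀ z, g z ≤ f z) (hg : ∑' z, g z ≠ ⊤) :
    ∑' z, (f z - g z) = ∑' z, f z - ∑' z, g z := by
  refine ENNReal.eq_sub_of_add_eq hg ?_
  rw [← ENNReal.tsum_add]
  exact tsum_congr fun z => tsub_add_cancel_of_le (hle z)

end Helpers

section Balance

variable {V : Type*} [DecidableEq V] {E : V → V → Prop}

lemma T_balance (w : {l : List V // IsSACycle E l} → ℝ≥0∞) (y : V) :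
    ∑' z, ∑' c : {l : List V // IsSACycle E l},
        (if (y, z) ∈ (c : List V).zip ((c : List V).rotate 1) then w c else 0)
      = ∑' x, ∑' c : {l : List V // IsSACycle E l},
        (if (x, y) ∈ (c : List V).zip ((c : List V).rotate 1) then w c else 0) := by
  rw [ENNReal.tsum_comm, ENNReal.tsum_comm
    (f := fun x (c : {l : List V // IsSACycle E l}) =>
      (if (x, y) ∈ (c : List V).zip ((c : List V).rotate 1) then w c else 0))]
  refine tsum_congr fun c => ?_
  rw [tsum_ite_out c.2.2.1 y (w c), tsum_ite_in c.2.2.1 y (w c)]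

end Balance

theorem stmt6 {V : Type*} [Countable V] [DecidableEq V] (E : V → V → Prop)
    (hloop : ∀ y, ¬ E y y)
    (Q : V → V → ℝ)
    (hnonneg : ∀ y z, 0 ≤ Q y z)
    (hzero : ∀ y z, ¬ E y z → Q y z = 0)
    (hrow : ∀ y, Summable (Q y))
    (hcol : ∀ y, Summable (fun z => Q z y))
    (hdiv : ∀ y, ∑' z, Q y z = ∑' z, Q z y)
    (Vn : ℕ → Finset V)
    (hmono : Monotone Vn)
    (hcover : ∀ x : V, ∃ n, x ∈ Vn n)
    (hflux : Filter.Tendsto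
      (fun n => ∑ y ∈ Vn n, ∑' z, (if z ∈ Vn n then 0 else Q y z))
      Filter.atTop (nhds 0)) :
    ∃ w : {l : List V // IsSACycle E l} → ℝ,
      (∀ c, 0 ≤ w c) ∧
      ∀ y z, E y z →
        HasSum
          (fun c : {l : List V // IsSACycle E l} =>
            if (y, z) ∈ (c : List V).zip ((c : List V).rotate 1) then w c else 0)
          (Q y z) := by
  classical
  set 𝒞 := {l : List V // IsSACycle E l} with h𝒞
  set Qe : V → V → ℝ≥0∞ := fun u v => ENNReal.ofReal (Q u v) with hQe
  have hQfin : ∀ u v, Qe u v ≠ ⊤ := fun u v => ENNReal.ofReal_ne_top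
  have hQrow : ∀ y, ∑' z, Qe y z = ENNReal.ofReal (∑' z, Q y z) := fun y =>
    (ENNReal.ofReal_tsum_of_nonneg (hnonneg y) (hrow y)).symm
  have hQcol : ∀ y, ∑' z, Qe z y = ENNReal.ofReal (∑' z, Q z y) := fun y =>
    (ENNReal.ofReal_tsum_of_nonneg (fun z => hnonneg z y) (hcol y)).symm
  have hQdiv : ∀ y, ∑' z, Qe y z = ∑' z, Qe z y := fun y => by
    rw [hQrow, hQcol, hdiv]
  have hrowfin : ∀ y, ∑' z, Qe y z ≠ ⊤ := fun y => by
    rw [hQrow]; exact ENNReal.ofReal_ne_top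
  have hcolfin : ∀ y, ∑' z, Qe z y ≠ ⊤ := fun y => by
    rw [hQcol]; exact ENNReal.ofReal_ne_top
  have hEQ : ∀ u v, Qe u v ≠ 0 → E u v := by
    intro u v h
    by_contra hne
    exact h (by rw [hQe]; simp [hzero u v hne])
  -- flux in ℝ≥0∞
  have hfluxE : Tendsto (fun n => ∑ y ∈ Vn n, ∑' z, (if z ∈ Vn n then 0 else Qe y z))
      atTop (nhds 0) := by
    have heq : ∀ n, ∑ y ∈ Vn n, ∑' z, (if z ∈ Vn n then 0 else Qe y z)
        = ENNReal.ofReal (∑ y ∈ Vn n, ∑' z, (if z ∈ Vn n then 0 else Q y z)) := by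
      intro n
      rw [ENNReal.ofReal_sum_of_nonneg (fun y _ => tsum_nonneg fun z => by by_cases hz : z ∈ Vn n <;> simp [hz, hnonneg y z])]
      refine Finset.sum_congr rfl fun y _ => ?_
      have hsummable : Summable (fun z => if z ∈ Vn n then 0 else Q y z) :=
        (hrow y).of_nonneg_of_le (fun z => by by_cases hz : z ∈ Vn n <;> simp [hz, hnonneg y z])
          (fun z => by by_cases hz : z ∈ Vn n <;> simp [hz, hnonneg y z])
      rw [ENNReal.ofReal_tsum_of_nonneg (fun z => by by_cases hz : z ∈ Vn n <;> simp [hz, hnonneg y z]) hsummable]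
      exact tsum_congr fun z => by by_cases hz : z ∈ Vn n <;> simp [hz, hQe]
    have := ENNReal.tendsto_ofReal hflux
    rw [ENNReal.ofReal_zero] at this
    exact this.congr fun n => (heq n).symm
  -- the set of sub-decompositions
  set S : Set (𝒞 → ℝ≥0∞) := {w | ∀ a b : V,
    ∑' c : 𝒞, (if (a, b) ∈ (c : List V).zip ((c : List V).rotate 1) then w c else 0)
      ≤ Qe a b} with hS
  -- Zorn: a maximal sub-decomposition exists
  obtain ⟨w, hwS, hwmax⟩ : ∃ w, Maximal (· ∈ S) w := by
    refine zorn_le₀ S ?_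
    intro ch hchS hchain
    refine ⟨fun C => ⨆ w : ch, (w : 𝒞 → ℝ≥0∞) C, ?_, ?_⟩
    · intro a b
      rw [ENNReal.tsum_eq_iSup_sum]
      refine iSup_le fun F => ?_
      rcases Set.eq_empty_or_nonempty ch with rfl | hne
      · have : ∀ C : 𝒞, (if (a, b) ∈ (C : List V).zip ((C : List V).rotate 1)
            then ⨆ w : (∅ : Set (𝒞 → ℝ≥0∞)), (w : 𝒞 → ℝ≥0∞) C else 0) = 0 := by
          intro C
          by_cases h : (a, b) ∈ (C : List V).zip ((C : List V).rotate 1) <;> simp [h]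
        rw [Finset.sum_congr rfl fun C _ => this C]
        simp
      · haveI : Nonempty ch := hne.to_subtype
        have hstep : ∀ C : 𝒞, (if (a, b) ∈ (C : List V).zip ((C : List V).rotate 1)
              then ⨆ w : ch, (w : 𝒞 → ℝ≥0∞) C else 0)
            = ⨆ w : ch, (if (a, b) ∈ (C : List V).zip ((C : List V).rotate 1)
              then (w : 𝒞 → ℝ≥0∞) C else 0) := by
          intro C
          by_cases h : (a, b) ∈ (C : List V).zip ((C : List V).rotate 1) <;> simp [h]
        rw [Finset.sum_congr rfl fun C _ => hstep C]
        rw [finset_sum_iSup_chain ?hdir F]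
        case hdir =>
          intro i j
          rcases hchain.total i.2 j.2 with h | h
          · exact ⟨j, fun C => by by_cases hc : (a, b) ∈ (C : List V).zip ((C : List V).rotate 1) <;>
              simp [hc, h C], le_refl _⟩
          · exact ⟨i, le_refl _, fun C => by
              by_cases hc : (a, b) ∈ (C : List V).zip ((C : List V).rotate 1) <;> simp [hc, h C]⟩
        refine iSup_le fun wc => ?_
        exact le_trans (ENNReal.sum_le_tsum F) (hchS wc.2 a b)
    · intro z hz
      exact fun C => le_iSup (fun w : ch => (w : 𝒞 → ℝ≥0∞) C) ⟨z, hz⟩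
  set T : V → V → ℝ≥0∞ := fun a b =>
    ∑' c : 𝒞, (if (a, b) ∈ (c : List V).zip ((c : List V).rotate 1) then w c else 0) with hT
  have hTle : ∀ a b, T a b ≤ Qe a b := fun a b => hwS a b
  have hwfin : ∀ c : 𝒞, w c ≠ ⊤ := by
    intro c
    have hlen : 0 < (((c : List V)).zip ((c : List V).rotate 1)).length := by
      rw [length_zip, length_rotate, min_self]
      exact List.length_pos_iff.2 c.2.1
    set p := (((c : List V)).zip ((c : List V).rotate 1))[0]'hlen with hp
    have hpmem : p ∈ ((c : List V)).zip ((c : List V).rotate 1) := by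
      rw [hp]; exact List.getElem_mem hlen
    have hle : w c ≤ T p.1 p.2 := by
      rw [hT]
      have := ENNReal.le_tsum (f := fun c' : 𝒞 =>
        (if (p.1, p.2) ∈ (c' : List V).zip ((c' : List V).rotate 1) then w c' else 0)) c
      rwa [Prod.mk.eta, if_pos hpmem] at this
    exact fun htop => hQfin p.1 p.2 (top_le_iff.1 ((htop ▸ hle).trans (hTle p.1 p.2)))
  -- maximality forces equality
  have hTQ : ∀ a b, T a b = Qe a b := by
    by_contra hcon
    push_neg at hcon
    obtain ⟨a, b, hne⟩ := hcon
    have hlt : T a b < Qe a b := lt_of_le_of_ne (hTle a b) hne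
    set R : V → V → ℝ≥0∞ := fun u v => Qe u v - T u v with hR
    have hRQ : ∀ u v, R u v ≤ Qe u v := fun u v => tsub_le_self
    have hTbal : ∀ y, ∑' z, T y z = ∑' z, T z y := fun y => T_balance w y
    have hTrowfin : ∀ y, ∑' z, T y z ≠ ⊤ := fun y =>
      fun h => hrowfin y (top_le_iff.1 (h ▸ ENNReal.tsum_le_tsum fun z => hTle y z))
    have hTcolfin : ∀ y, ∑' z, T z y ≠ ⊤ := fun y =>
      fun h => hcolfin y (top_le_iff.1 (h ▸ ENNReal.tsum_le_tsum fun z => hTle z y))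
    have hRdiv : ∀ y, ∑' z, R y z = ∑' z, R z y := by
      intro y
      rw [hR]
      rw [tsum_sub' (fun z => hTle y z) (hTrowfin y),
          tsum_sub' (fun z => hTle z y) (hTcolfin y), hQdiv y, hTbal y]
    have hRab : 0 < R a b := tsub_pos_iff_lt.2 hlt
    set r : V → V → Prop := fun u v => 0 < R u v with hr
    have hrE : ∀ u v, r u v → E u v := by
      intro u v huv
      refine hEQ u v fun h0 => ?_
      have h1 : R u v = 0 := le_antisymm (h0 ▸ hRQ u v) zero_le
      have huv' : 0 < R u v := huv
      rw [h1] at huv'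
      exact lt_irrefl 0 huv'
    by_cases hreach : Relation.ReflTransGen r b a
    · obtain ⟨L, hSA, hmemab, hpos⟩ := exists_cycle_of_reach hloop hrE hRab hreach
      set C : 𝒞 := ⟨L, hSA⟩ with hC
      set s : Finset (V × V) := (L.zip (L.rotate 1)).toFinset with hs
      have hsne : (a, b) ∈ s := List.mem_toFinset.2 hmemab
      set δ : ℝ≥0∞ := s.inf' ⟨(a, b), hsne⟩ (fun p => R p.1 p.2) with hδ
      have hδpos : 0 < δ := by
        rw [hδ]
        exact (Finset.lt_inf'_iff _).2 fun p hps => hpos p (List.mem_toFinset.1 hps)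
      have hδle : ∀ p ∈ L.zip (L.rotate 1), δ ≤ R p.1 p.2 := fun p hp =>
        Finset.inf'_le _ (List.mem_toFinset.2 hp)
      set w' : 𝒞 → ℝ≥0∞ := fun c => w c + (if c = C then δ else 0) with hw'
      have hw'S : w' ∈ S := by
        intro a' b'
        have hsplit : (fun c : 𝒞 =>
            (if (a', b') ∈ (c : List V).zip ((c : List V).rotate 1) then w' c else 0))
            = fun c : 𝒞 =>
              (if (a', b') ∈ (c : List V).zip ((c : List V).rotate 1) then w c else 0)
              + (if (a', b') ∈ (c : List V).zip ((c : List V).rotate 1)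
                  then (if c = C then δ else 0) else 0) := by
          funext c
          by_cases h : (a', b') ∈ (c : List V).zip ((c : List V).rotate 1) <;> simp [h, hw']
        rw [hsplit, ENNReal.tsum_add]
        have hsingle : ∑' c : 𝒞, (if (a', b') ∈ (c : List V).zip ((c : List V).rotate 1)
            then (if c = C then δ else 0) else 0)
            = (if (a', b') ∈ (C : List V).zip ((C : List V).rotate 1) then δ else 0) := by
          rw [tsum_eq_single C]
          · simp
          · intro c hc
            by_cases h : (a', b') ∈ (c : List V).zip ((c : List V).rotate 1) <;> simp [h, hc]
        rw [hsingle]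
        by_cases hmem : (a', b') ∈ (C : List V).zip ((C : List V).rotate 1)
        · rw [if_pos hmem]
          have h1 : δ ≤ R a' b' := hδle (a', b') hmem
          calc T a' b' + δ ≤ T a' b' + R a' b' := add_le_add_right h1 _
            _ = Qe a' b' := by rw [hR]; exact add_tsub_cancel_of_le (hTle a' b')
        · rw [if_neg hmem, add_zero]; exact hTle a' b'
      have hwle : w ≤ w' := fun c => le_self_add
      have : w' ≤ w := hwmax hw'S hwle
      have hcontra : w C < w' C := by
        rw [hw']
        simp only [if_pos rfl]
        exact ENNReal.lt_add_right (hwfin C) hδpos.ne'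
      exact absurd (this C) (not_le.2 hcontra)
    · obtain ⟨n₀, hb₀⟩ := hcover b
      exact no_reach_contra hRQ hQfin hrowfin hRdiv Vn hmono hfluxE hRab hb₀ hreach
  -- convert back to ℝ
  refine ⟨fun c => (w c).toReal, fun c => ENNReal.toReal_nonneg, ?_⟩
  intro y z hE
  have hfsum : ∑' c : 𝒞,
      (if (y, z) ∈ (c : List V).zip ((c : List V).rotate 1) then w c else 0) = Qe y z := hTQ y z
  have hffin : ∀ c : 𝒞,
      (if (y, z) ∈ (c : List V).zip ((c : List V).rotate 1) then w c else 0) ≠ ⊤ := by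
    intro c
    by_cases h : (y, z) ∈ (c : List V).zip ((c : List V).rotate 1) <;> simp [h, hwfin c]
  have hsummable : Summable (fun c : 𝒞 =>
      ((if (y, z) ∈ (c : List V).zip ((c : List V).rotate 1) then w c else 0)).toReal) :=
    ENNReal.summable_toReal (by rw [hfsum]; exact hQfin y z)
  have htsum : ∑' c : 𝒞,
      ((if (y, z) ∈ (c : List V).zip ((c : List V).rotate 1) then w c else 0)).toReal
      = Q y z := by
    rw [← ENNReal.tsum_toReal_eq hffin, hfsum, hQe]
    exact ENNReal.toReal_ofReal (hnonneg y z)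
  have hcongr : ∀ c : 𝒞,
      ((if (y, z) ∈ (c : List V).zip ((c : List V).rotate 1) then w c else 0)).toReal
      = (if (y, z) ∈ (c : List V).zip ((c : List V).rotate 1) then (w c).toReal else 0) := by
    intro c
    by_cases h : (y, z) ∈ (c : List V).zip ((c : List V).rotate 1) <;> simp [h]
  rw [tsum_congr hcongr] at htsum
  have hsummable' := hsummable.congr hcongr
  exact htsum ▸ hsummable'.hasSum
end

section
/- Every divergenceless flow Q ∈ ℓ¹₊(E) on a countable oriented graph admits a cyclic decomposition as a countable nonnegative combination of indicators of self-avoiding finite directed cycles. -/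
open scoped ENNReal

namespace Stmt7Aux

variable {V : Type*}

lemma chain_cons' {r : V → V → Prop} {a b : V} {l : List V} :
    List.Chain r a (b :: l) ↔ r a b ∧ List.Chain r b l := List.isChain_cons_cons

lemma chain_iff_zip {r : V → V → Prop} :
    ∀ (t : List V) (a : V), List.Chain r a t ↔ ∀ p ∈ (a :: t).zip t, r p.1 p.2
  | [], a => by simp [List.Chain]
  | b :: t, a => by
    rw [chain_cons', chain_iff_zip t b]
    simp only [List.zip_cons_cons, List.mem_cons]
    constructor
    · rintro ⟨h1, h2⟩ p (rfl | hp)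
      · exact h1
      · exact h2 p hp
    · intro h
      exact ⟨h _ (Or.inl rfl), fun p hp => h p (Or.inr hp)⟩

lemma zip_append_last :
    ∀ (t : List V) (a x : V),
      (a :: t).zip (t ++ [x]) =
        (a :: t).zip t ++ [((a :: t).getLast (List.cons_ne_nil a t), x)]
  | [], a, x => by simp
  | b :: t, a, x => by
    have ih := zip_append_last t b x
    simp only [List.cons_append, List.zip_cons_cons, ih]
    simp [List.getLast]

lemma chain_snoc {r : V → V → Prop} :
    ∀ (t : List V) (a b : V), List.Chain r a t →
      r ((a :: t).getLast (List.cons_ne_nil a t)) b → List.Chain r a (t ++ [b])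
  | [], a, b => by
    intro _ h
    simpa [List.Chain] using h
  | c :: t, a, b => by
    intro hch hr
    rw [chain_cons'] at hch
    rw [List.cons_append, chain_cons']
    refine ⟨hch.1, chain_snoc t c b hch.2 ?_⟩
    simpa [List.getLast] using hr

lemma chain_take {r : V → V → Prop} :
    ∀ (t : List V) (a b : V), List.Chain r a t → b ∈ a :: t →
      ∃ t', List.Chain r a t' ∧ (a :: t').getLast (List.cons_ne_nil a t') = b ∧
        (a :: t').Sublist (a :: t)
  | [], a, b => by
    intro _ hb
    refine ⟨[], List.Chain.nil, ?_, by simp⟩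
    simp only [List.mem_singleton] at hb
    simp [hb]
  | c :: t, a, b => by
    intro hch hb
    rcases List.mem_cons.1 hb with rfl | hb'
    · exact ⟨[], List.Chain.nil, by simp, by simp⟩
    · rw [chain_cons'] at hch
      obtain ⟨s, hs, hlast, hsub⟩ := chain_take t c b hch.2 hb'
      refine ⟨c :: s, chain_cons'.2 ⟨hch.1, hs⟩, ?_, hsub.cons₂ a⟩
      simpa [List.getLast] using hlast

lemma exists_nodup_chain {r : V → V → Prop} [DecidableEq V] {a b : V}
    (h : Relation.ReflTransGen r a b) :
    ∃ t : List V, List.Chain r a t ∧ (a :: t).getLast (List.cons_ne_nil a t) = b ∧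
      (a :: t).Nodup := by
  induction h with
  | refl => exact ⟨[], List.Chain.nil, by simp, by simp⟩
  | @tail c d hac hcd ih =>
    obtain ⟨t, hch, hlast, hnd⟩ := ih
    by_cases hd : d ∈ a :: t
    · obtain ⟨t', h1, h2, h3⟩ := chain_take t a d hch hd
      exact ⟨t', h1, h2, h3.nodup hnd⟩
    · refine ⟨t ++ [d], chain_snoc t a d hch (by rw [hlast]; exact hcd), ?_, ?_⟩
      · simp [List.getLast_append]
      · rw [show a :: (t ++ [d]) = (a :: t) ++ [d] by simp]
        simp only [List.nodup_append, List.nodup_singleton, true_and]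
        exact ⟨hnd, by simp at hd ⊢; exact ⟨fun h => hd.1 h.symm, fun x hx h => hd.2 (h ▸ hx)⟩⟩

variable {V : Type*}

lemma tsum_sub' {ι : Type*} {f g : ι → ℝ≥0∞} (hle : ∀ i, g i ≤ f i)
    (hg : (∑' i, g i) ≠ ⊤) :
    (∑' i, (f i - g i)) = (∑' i, f i) - ∑' i, g i := by
  have h : (∑' i, (f i - g i)) + ∑' i, g i = ∑' i, f i := by
    rw [← ENNReal.tsum_add]; exact tsum_congr fun i => tsub_add_cancel_of_le (hle i)
  exact ENNReal.eq_sub_of_add_eq hg h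

lemma tsum_ite_mem_fst [DecidableEq V] {P : List (V × V)} (h : (P.map Prod.fst).Nodup)
    (y : V) (δ : ℝ≥0∞) :
    (∑' z, if (y, z) ∈ P then δ else 0) = if y ∈ P.map Prod.fst then δ else 0 := by
  by_cases hy : y ∈ P.map Prod.fst
  · rw [if_pos hy]
    obtain ⟨p, hp, hp1⟩ := List.mem_map.1 hy
    have hiff : ∀ w, ((y, w) ∈ P) ↔ w = p.2 := by
      intro w
      constructor
      · intro hw
        have := List.inj_on_of_nodup_map h hw hp (by simp [hp1])
        exact congrArg Prod.snd this
      · rintro rfl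
        have hpe : (y, p.2) = p := by rw [← hp1]
        rw [hpe]; exact hp
    calc (∑' w, if (y, w) ∈ P then δ else 0)
        = ∑' w, if w = p.2 then δ else 0 :=
          tsum_congr fun w => if_congr (hiff w) rfl rfl
      _ = δ := tsum_ite_eq p.2 (fun _ => δ)
  · rw [if_neg hy]
    have h0 : ∀ w, ¬ ((y, w) ∈ P) := fun w hw => hy (List.mem_map.2 ⟨(y, w), hw, rfl⟩)
    simp [h0]

lemma tsum_ite_mem_snd [DecidableEq V] {P : List (V × V)} (h : (P.map Prod.snd).Nodup)
    (y : V) (δ : ℝ≥0∞) :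
    (∑' z, if (z, y) ∈ P then δ else 0) = if y ∈ P.map Prod.snd then δ else 0 := by
  by_cases hy : y ∈ P.map Prod.snd
  · rw [if_pos hy]
    obtain ⟨p, hp, hp1⟩ := List.mem_map.1 hy
    have hiff : ∀ w, ((w, y) ∈ P) ↔ w = p.1 := by
      intro w
      constructor
      · intro hw
        have := List.inj_on_of_nodup_map h hw hp (by simp [hp1])
        exact congrArg Prod.fst this
      · rintro rfl
        have hpe : (p.1, y) = p := by rw [← hp1]
        rw [hpe]; exact hp
    calc (∑' w, if (w, y) ∈ P then δ else 0)
        = ∑' w, if w = p.1 then δ else 0 :=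
          tsum_congr fun w => if_congr (hiff w) rfl rfl
      _ = δ := tsum_ite_eq p.1 (fun _ => δ)
  · rw [if_neg hy]
    have h0 : ∀ w, ¬ ((w, y) ∈ P) := fun w hw => hy (List.mem_map.2 ⟨(w, y), hw, rfl⟩)
    simp [h0]

lemma cycle_balance [DecidableEq V] {l : List V} (hnd : l.Nodup)
    (y : V) (δ : ℝ≥0∞) :
    (∑' w, if (y, w) ∈ l.zip (l.rotate 1) then δ else 0)
      = ∑' w, if (w, y) ∈ l.zip (l.rotate 1) then δ else 0 := by
  have hlen : (l.rotate 1).length = l.length := List.length_rotate l 1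
  have hfst : (l.zip (l.rotate 1)).map Prod.fst = l :=
    List.map_fst_zip (le_of_eq hlen.symm)
  have hsnd : (l.zip (l.rotate 1)).map Prod.snd = l.rotate 1 :=
    List.map_snd_zip (le_of_eq hlen)
  rw [tsum_ite_mem_fst (by rw [hfst]; exact hnd) y δ,
    tsum_ite_mem_snd (by rw [hsnd]; exact List.nodup_rotate.2 hnd) y δ, hfst, hsnd]
  simp [List.mem_rotate]

lemma extract [DecidableEq V] (q : V → V → ℝ≥0∞)
    (hmass : (∑' p : V × V, q p.1 p.2) ≠ ⊤)
    (hdiv : ∀ y, (∑' z, q y z) = ∑' z, q z y)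
    {y z : V} (hyz : 0 < q y z) (hne : y ≠ z) :
    ∃ l : List V, l ≠ [] ∧ l.Nodup ∧ (y, z) ∈ l.zip (l.rotate 1) ∧
      ∀ p ∈ l.zip (l.rotate 1), 0 < q p.1 p.2 := by
  set r : V → V → Prop := fun a b => 0 < q a b with hr
  set A : Set V := {a | Relation.ReflTransGen r z a} with hA
  have hzA : z ∈ A := Relation.ReflTransGen.refl
  have hyA : y ∈ A := by
    by_contra hy
    have hXfin : (∑' a : A, ∑' b : A, q ↑a ↑b) ≠ ⊤ := by
      refine ne_top_of_le_ne_top hmass ?_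
      calc (∑' a : A, ∑' b : A, q ↑a ↑b)
          ≤ ∑' a : A, ∑' b, q ↑a b :=
            ENNReal.tsum_le_tsum fun a =>
              ENNReal.tsum_comp_le_tsum_of_injective Subtype.val_injective _
        _ ≤ ∑' a, ∑' b, q a b :=
            ENNReal.tsum_comp_le_tsum_of_injective Subtype.val_injective _
        _ = ∑' p : V × V, q p.1 p.2 := ENNReal.tsum_prod.symm
    have hmain : (∑' a : A, ∑' b : A, q ↑a ↑b) + (∑' a : A, ∑' b : ↥Aᶜ, q ↑a ↑b)
        = (∑' a : A, ∑' b : A, q ↑b ↑a) + (∑' a : A, ∑' b : ↥Aᶜ, q ↑b ↑a) := by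
      rw [← ENNReal.tsum_add, ← ENNReal.tsum_add]
      refine tsum_congr fun a => ?_
      rw [Summable.tsum_add_tsum_compl (f := fun b => q ↑a b) ENNReal.summable ENNReal.summable,
        Summable.tsum_add_tsum_compl (f := fun b => q b ↑a) ENNReal.summable ENNReal.summable]
      exact hdiv a
    have hswap : (∑' a : A, ∑' b : A, q ↑b ↑a) = ∑' a : A, ∑' b : A, q ↑a ↑b :=
      ENNReal.tsum_comm
    rw [hswap] at hmain
    have hout : (∑' a : A, ∑' b : ↥Aᶜ, q ↑a ↑b) = 0 := by
      refine (ENNReal.summable.tsum_eq_zero_iff).2 fun a => ?_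
      refine (ENNReal.summable.tsum_eq_zero_iff).2 fun b => ?_
      by_contra hb
      exact b.2 (a.2.tail (pos_iff_ne_zero.2 hb))
    have hin : (∑' a : A, ∑' b : ↥Aᶜ, q ↑b ↑a) = 0 := by
      rw [hout] at hmain
      exact ((ENNReal.add_right_inj hXfin).1 hmain).symm
    have hle : q y z ≤ ∑' a : A, ∑' b : ↥Aᶜ, q ↑b ↑a := by
      calc q y z ≤ ∑' b : ↥Aᶜ, q ↑b z := ENNReal.le_tsum (⟨y, hy⟩ : ↥Aᶜ)
        _ ≤ _ := ENNReal.le_tsum (⟨z, hzA⟩ : A)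
    rw [hin] at hle
    exact absurd (le_antisymm hle zero_le) (ne_of_gt hyz)
  -- build a nodup path from z to y along r, then close the cycle with edge (y, z)
  obtain ⟨t, hch, hlast, hnd⟩ := exists_nodup_chain hyA
  refine ⟨z :: t, List.cons_ne_nil _ _, hnd, ?_, ?_⟩
  · have hrot : (z :: t).rotate 1 = t ++ [z] := by
      rw [List.rotate_cons_succ, List.rotate_zero]
    rw [hrot, zip_append_last, hlast]
    exact List.mem_append_right _ (List.mem_singleton.2 rfl)
  · intro p hp
    have hrot : (z :: t).rotate 1 = t ++ [z] := by
      rw [List.rotate_cons_succ, List.rotate_zero]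
    rw [hrot, zip_append_last, hlast] at hp
    rcases List.mem_append.1 hp with hp1 | hp2
    · exact (chain_iff_zip t z).1 hch p hp1
    · rw [List.mem_singleton.1 hp2]
      exact hyz

end Stmt7Aux
section Part3
variable {V : Type*} [DecidableEq V]

/-- The list of (cyclically) consecutive pairs of a list. -/
def cpairs (l : List V) : List (V × V) := l.zip (l.rotate 1)

variable (E : V → V → Prop)

lemma cpairs_ne_nil {l : List V} (h : l ≠ []) : cpairs l ≠ [] := by
  intro hc
  apply h
  have := congrArg List.length hc
  simp only [cpairs, List.length_zip, List.length_rotate, min_self, List.length_nil] at this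
  exact List.eq_nil_of_length_eq_zero this

/-- minimum of a flow over the edges of a cycle -/
noncomputable def minq (q : V → V → ℝ≥0∞) (c : {l : List V // IsSACycle E l}) : ℝ≥0∞ :=
  (cpairs (c : List V)).toFinset.inf fun p => q p.1 p.2

lemma minq_le {q : V → V → ℝ≥0∞} {c : {l : List V // IsSACycle E l}} {p : V × V}
    (hp : p ∈ cpairs (c : List V)) : minq E q c ≤ q p.1 p.2 :=
  Finset.inf_le (List.mem_toFinset.2 hp)

lemma le_minq {q : V → V → ℝ≥0∞} {c : {l : List V // IsSACycle E l}} {δ : ℝ≥0∞}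
    (h : ∀ p ∈ cpairs (c : List V), δ ≤ q p.1 p.2) : δ ≤ minq E q c :=
  Finset.le_inf fun p hp => h p (List.mem_toFinset.1 hp)

lemma minq_pos {q : V → V → ℝ≥0∞} {c : {l : List V // IsSACycle E l}}
    (h : ∀ p ∈ cpairs (c : List V), 0 < q p.1 p.2) : 0 < minq E q c :=
  (Finset.lt_inf_iff (by simp : (0:ℝ≥0∞) < ⊤)).2 fun p hp => h p (List.mem_toFinset.1 hp)

lemma minq_mono {q q' : V → V → ℝ≥0∞} (h : ∀ y z, q y z ≤ q' y z)
    (c : {l : List V // IsSACycle E l}) : minq E q c ≤ minq E q' c :=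
  le_minq E fun p hp => le_trans (minq_le E hp) (h p.1 p.2)

lemma minq_le_mass (q : V → V → ℝ≥0∞) (c : {l : List V // IsSACycle E l}) :
    minq E q c ≤ ∑' p : V × V, q p.1 p.2 := by
  obtain ⟨p, hp⟩ := List.exists_mem_of_ne_nil _ (cpairs_ne_nil c.2.1)
  exact le_trans (minq_le E hp) (ENNReal.le_tsum p)

variable [Nonempty {l : List V // IsSACycle E l}]

open scoped Classical in
/-- pick a near-optimal cycle: its minimum is at least half the supremum. -/
noncomputable def pick (q : V → V → ℝ≥0∞) : {l : List V // IsSACycle E l} :=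
  if h : ∃ c, (⨆ c', minq E q c') ≤ 2 * minq E q c then h.choose
  else Classical.arbitrary _

lemma pick_spec {q : V → V → ℝ≥0∞} (hfin : (⨆ c', minq E q c') ≠ ⊤) :
    (⨆ c', minq E q c') ≤ 2 * minq E q (pick E q) := by
  have hex : ∃ c, (⨆ c', minq E q c') ≤ 2 * minq E q c := by
    rcases eq_or_ne (⨆ c', minq E q c') 0 with h0 | h0
    · exact ⟨Classical.arbitrary _, by rw [h0]; exact zero_le⟩
    · have hhalf : (⨆ c', minq E q c') / 2 < ⨆ c', minq E q c' :=
        ENNReal.half_lt_self h0 hfin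
      obtain ⟨c, hc⟩ := lt_iSup_iff.1 hhalf
      refine ⟨c, ?_⟩
      calc (⨆ c', minq E q c') = (⨆ c', minq E q c') / 2 * 2 :=
            (ENNReal.div_mul_cancel two_ne_zero ENNReal.ofNat_ne_top).symm
        _ ≤ minq E q c * 2 := mul_le_mul_left hc.le 2
        _ = 2 * minq E q c := mul_comm _ _
  classical
  rw [pick]
  rw [dif_pos hex]
  exact hex.choose_spec

variable (Q' : V → V → ℝ≥0∞)

/-- the sequence of residual flows under greedy cycle extraction -/
noncomputable def Qs : ℕ → V → V → ℝ≥0∞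
  | 0 => Q'
  | n + 1 => fun y z =>
      Qs n y z -
        (if (y, z) ∈ cpairs ((pick E (Qs n) : List V)) then minq E (Qs n) (pick E (Qs n))
         else 0)

/-- the cycle extracted at stage `n` -/
noncomputable def Cn (n : ℕ) : {l : List V // IsSACycle E l} := pick E (Qs E Q' n)

/-- the weight extracted at stage `n` -/
noncomputable def δn (n : ℕ) : ℝ≥0∞ := minq E (Qs E Q' n) (Cn E Q' n)

/-- the flow extracted at stage `n` -/
noncomputable def tn (n : ℕ) (y z : V) : ℝ≥0∞ :=
  if (y, z) ∈ cpairs ((Cn E Q' n : List V)) then δn E Q' n else 0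

lemma Qs_succ (n : ℕ) (y z : V) :
    Qs E Q' (n + 1) y z = Qs E Q' n y z - tn E Q' n y z := rfl

lemma tn_le (n : ℕ) (y z : V) : tn E Q' n y z ≤ Qs E Q' n y z := by
  rw [tn]
  split
  · exact minq_le E (by assumption)
  · exact zero_le

lemma Qs_add_sum (n : ℕ) (y z : V) :
    Qs E Q' n y z + ∑ m ∈ Finset.range n, tn E Q' m y z = Q' y z := by
  induction n with
  | zero => simp [Qs]
  | succ n ih =>
    have h : Qs E Q' (n + 1) y z + tn E Q' n y z = Qs E Q' n y z := by
      rw [Qs_succ]; exact tsub_add_cancel_of_le (tn_le E Q' n y z)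
    rw [Finset.sum_range_succ]
    calc Qs E Q' (n + 1) y z + (∑ m ∈ Finset.range n, tn E Q' m y z + tn E Q' n y z)
        = Qs E Q' (n + 1) y z + tn E Q' n y z + ∑ m ∈ Finset.range n, tn E Q' m y z := by
          ring
      _ = Qs E Q' n y z + ∑ m ∈ Finset.range n, tn E Q' m y z := by rw [h]
      _ = Q' y z := ih

lemma Qs_le (n : ℕ) (y z : V) : Qs E Q' n y z ≤ Q' y z := by
  conv_rhs => rw [← Qs_add_sum E Q' n y z]
  exact le_self_add

end Part3
section Part4
variable {V : Type*} [DecidableEq V] (E : V → V → Prop)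
variable [Nonempty {l : List V // IsSACycle E l}] (Q' : V → V → ℝ≥0∞)

/-- total extracted flow -/
noncomputable def Sfun (y z : V) : ℝ≥0∞ := ∑' n, tn E Q' n y z

lemma sum_tn_le (n : ℕ) (y z : V) :
    ∑ m ∈ Finset.range n, tn E Q' m y z ≤ Q' y z := by
  conv_rhs => rw [← Qs_add_sum E Q' n y z]
  exact le_add_self

lemma Sfun_le (y z : V) : Sfun E Q' y z ≤ Q' y z := by
  rw [Sfun, ENNReal.tsum_eq_iSup_sum]
  refine iSup_le fun s => ?_
  obtain ⟨n, hn⟩ := Finset.exists_nat_subset_range s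
  exact le_trans (Finset.sum_le_sum_of_subset hn) (sum_tn_le E Q' n y z)

/-- the residual flow -/
noncomputable def Rfun (y z : V) : ℝ≥0∞ := Q' y z - Sfun E Q' y z

lemma Rfun_le_Qs (hQtop : ∀ y z, Q' y z ≠ ⊤) (n : ℕ) (y z : V) :
    Rfun E Q' y z ≤ Qs E Q' n y z := by
  have heq : Qs E Q' n y z = Q' y z - ∑ m ∈ Finset.range n, tn E Q' m y z :=
    ENNReal.eq_sub_of_add_eq (ne_top_of_le_ne_top (hQtop y z) (sum_tn_le E Q' n y z))
      (Qs_add_sum E Q' n y z)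
  rw [heq, Rfun]
  exact tsub_le_tsub_left (ENNReal.sum_le_tsum _) _

lemma mass_step (n : ℕ) :
    (∑' p : V × V, Qs E Q' (n + 1) p.1 p.2) + δn E Q' n ≤
      ∑' p : V × V, Qs E Q' n p.1 p.2 := by
  have hmass : (∑' p : V × V, Qs E Q' (n + 1) p.1 p.2) + (∑' p : V × V, tn E Q' n p.1 p.2)
      = ∑' p : V × V, Qs E Q' n p.1 p.2 := by
    rw [← ENNReal.tsum_add]
    exact tsum_congr fun p => by
      rw [Qs_succ]; exact tsub_add_cancel_of_le (tn_le E Q' n p.1 p.2)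
  have hδ : δn E Q' n ≤ ∑' p : V × V, tn E Q' n p.1 p.2 := by
    obtain ⟨p, hp⟩ := List.exists_mem_of_ne_nil _ (cpairs_ne_nil ((Cn E Q' n).2.1))
    calc δn E Q' n = tn E Q' n p.1 p.2 := by rw [tn, if_pos (by simpa using hp)]
      _ ≤ _ := ENNReal.le_tsum p
  calc (∑' p : V × V, Qs E Q' (n + 1) p.1 p.2) + δn E Q' n
      ≤ (∑' p : V × V, Qs E Q' (n + 1) p.1 p.2) + ∑' p : V × V, tn E Q' n p.1 p.2 :=
        add_le_add_right hδ _
    _ = _ := hmass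

lemma tn_balance (n : ℕ) (y : V) :
    (∑' z, tn E Q' n y z) = ∑' z, tn E Q' n z y := by
  exact Stmt7Aux.cycle_balance (l := (Cn E Q' n : List V)) ((Cn E Q' n).2.2.1) y (δn E Q' n)

lemma Sfun_balance (hmass : (∑' p : V × V, Q' p.1 p.2) ≠ ⊤) (y : V) :
    (∑' z, Sfun E Q' y z) = ∑' z, Sfun E Q' z y := by
  simp only [Sfun]
  calc (∑' z, ∑' n, tn E Q' n y z) = ∑' n, ∑' z, tn E Q' n y z := ENNReal.tsum_comm
    _ = ∑' n, ∑' z, tn E Q' n z y := tsum_congr fun n => tn_balance E Q' n y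
    _ = ∑' z, ∑' n, tn E Q' n z y := ENNReal.tsum_comm

lemma row_fin (hmass : (∑' p : V × V, Q' p.1 p.2) ≠ ⊤) (y : V) :
    (∑' z, Q' y z) ≠ ⊤ := by
  refine ne_top_of_le_ne_top hmass ?_
  have : (∑' z, Q' y z) = ∑' z : V, (fun p : V × V => Q' p.1 p.2) (y, z) := rfl
  rw [this]
  exact ENNReal.tsum_comp_le_tsum_of_injective (fun a b h => by simpa using h) _

lemma col_fin (hmass : (∑' p : V × V, Q' p.1 p.2) ≠ ⊤) (y : V) :
    (∑' z, Q' z y) ≠ ⊤ := by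
  refine ne_top_of_le_ne_top hmass ?_
  have : (∑' z, Q' z y) = ∑' z : V, (fun p : V × V => Q' p.1 p.2) (z, y) := rfl
  rw [this]
  exact ENNReal.tsum_comp_le_tsum_of_injective (fun a b h => by simpa using h) _

lemma Rfun_div (hmass : (∑' p : V × V, Q' p.1 p.2) ≠ ⊤)
    (hdiv : ∀ y, (∑' z, Q' y z) = ∑' z, Q' z y) (y : V) :
    (∑' z, Rfun E Q' y z) = ∑' z, Rfun E Q' z y := by
  have h1 : (∑' z, Rfun E Q' y z) = (∑' z, Q' y z) - ∑' z, Sfun E Q' y z :=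
    Stmt7Aux.tsum_sub' (fun z => Sfun_le E Q' y z)
      (ne_top_of_le_ne_top (row_fin Q' hmass y) (ENNReal.tsum_le_tsum fun z => Sfun_le E Q' y z))
  have h2 : (∑' z, Rfun E Q' z y) = (∑' z, Q' z y) - ∑' z, Sfun E Q' z y :=
    Stmt7Aux.tsum_sub' (fun z => Sfun_le E Q' z y)
      (ne_top_of_le_ne_top (col_fin Q' hmass y) (ENNReal.tsum_le_tsum fun z => Sfun_le E Q' z y))
  rw [h1, h2, hdiv y, Sfun_balance E Q' hmass y]

/-- Key lemma: the residual flow is identically zero. -/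
lemma Rfun_eq_zero (hloop : ∀ y, ¬ E y y)
    (hsupp : ∀ y z, ¬ E y z → Q' y z = 0)
    (hmass : (∑' p : V × V, Q' p.1 p.2) ≠ ⊤)
    (hdiv : ∀ y, (∑' z, Q' y z) = ∑' z, Q' z y) (y z : V) :
    Rfun E Q' y z = 0 := by
  have hQtop : ∀ y z, Q' y z ≠ ⊤ := fun y z =>
    ne_top_of_le_ne_top hmass (le_trans (ENNReal.le_tsum (y, z)) le_rfl)
  by_contra hR
  have hRpos : 0 < Rfun E Q' y z := pos_iff_ne_zero.2 hR
  have hRle : ∀ a b, Rfun E Q' a b ≤ Q' a b := fun a b => tsub_le_self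
  have hRmass : (∑' p : V × V, Rfun E Q' p.1 p.2) ≠ ⊤ :=
    ne_top_of_le_ne_top hmass (ENNReal.tsum_le_tsum fun p => hRle p.1 p.2)
  have hRE : ∀ a b, 0 < Rfun E Q' a b → E a b := by
    intro a b hab
    by_contra hE
    have h0 := hRle a b
    rw [hsupp a b hE] at h0
    exact absurd (le_antisymm h0 zero_le) (ne_of_gt hab)
  have hne : y ≠ z := by
    intro h
    subst h
    exact hloop y (hRE y y hRpos)
  obtain ⟨l, hlne, hlnd, hlmem, hlpos⟩ :=
    Stmt7Aux.extract (Rfun E Q') hRmass (Rfun_div E Q' hmass hdiv) hRpos hne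
  have hcyc : IsSACycle E l := ⟨hlne, hlnd, fun p hp => hRE p.1 p.2 (hlpos p hp)⟩
  set c : {l : List V // IsSACycle E l} := ⟨l, hcyc⟩ with hc
  set δ : ℝ≥0∞ := minq E (Rfun E Q') c with hδ
  have hδpos : 0 < δ := minq_pos E hlpos
  have hδtop : δ ≠ ⊤ := ne_top_of_le_ne_top hRmass (minq_le_mass E _ c)
  have hδn : ∀ n, δ / 2 ≤ δn E Q' n := by
    intro n
    have h1 : δ ≤ minq E (Qs E Q' n) c :=
      minq_mono E (fun a b => Rfun_le_Qs E Q' hQtop n a b) c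
    have h2 : minq E (Qs E Q' n) c ≤ ⨆ c', minq E (Qs E Q' n) c' := le_iSup _ c
    have hfin : (⨆ c', minq E (Qs E Q' n) c') ≠ ⊤ := by
      refine ne_top_of_le_ne_top hmass (iSup_le fun c' => ?_)
      exact le_trans (minq_le_mass E _ c')
        (ENNReal.tsum_le_tsum fun p => Qs_le E Q' n p.1 p.2)
    have h3 : δ ≤ 2 * δn E Q' n := le_trans h1 (le_trans h2 (pick_spec E hfin))
    calc δ / 2 ≤ (2 * δn E Q' n) / 2 := ENNReal.div_le_div_right h3 2
      _ = δn E Q' n := by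
        rw [mul_div_assoc, ENNReal.mul_div_cancel two_ne_zero ENNReal.ofNat_ne_top]
  have hbound : ∀ N : ℕ, (∑' p : V × V, Qs E Q' N p.1 p.2) + (N : ℝ≥0∞) * (δ / 2) ≤
      ∑' p : V × V, Q' p.1 p.2 := by
    intro N
    induction N with
    | zero => simp [Qs]
    | succ N ih =>
      push_cast
      calc (∑' p : V × V, Qs E Q' (N + 1) p.1 p.2) + ((N : ℕ) + 1 : ℝ≥0∞) * (δ / 2)
          = ((∑' p : V × V, Qs E Q' (N + 1) p.1 p.2) + δ / 2) + (N : ℝ≥0∞) * (δ / 2) := by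
            push_cast
            ring
        _ ≤ ((∑' p : V × V, Qs E Q' (N + 1) p.1 p.2) + δn E Q' N) + (N : ℝ≥0∞) * (δ / 2) := by
            gcongr
            exact hδn N
        _ ≤ (∑' p : V × V, Qs E Q' N p.1 p.2) + (N : ℝ≥0∞) * (δ / 2) := by
            gcongr
            exact mass_step E Q' N
        _ ≤ _ := ih
  have hhalfpos : δ / 2 ≠ 0 := by
    simp only [ne_eq, ENNReal.div_eq_zero_iff, ENNReal.ofNat_ne_top, or_false]
    exact hδpos.ne'
  obtain ⟨N, hN⟩ := ENNReal.exists_nat_gt (ENNReal.div_lt_top hmass hhalfpos).ne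
  have hNlt : (∑' p : V × V, Q' p.1 p.2) < (N : ℝ≥0∞) * (δ / 2) :=
    (ENNReal.div_lt_iff (Or.inl hhalfpos)
      (Or.inl (ENNReal.div_lt_top hδtop two_ne_zero).ne)).1 hN
  exact absurd (le_trans (le_add_self) (hbound N)) (not_le.2 hNlt)

lemma Sfun_eq (hloop : ∀ y, ¬ E y y)
    (hsupp : ∀ y z, ¬ E y z → Q' y z = 0)
    (hmass : (∑' p : V × V, Q' p.1 p.2) ≠ ⊤)
    (hdiv : ∀ y, (∑' z, Q' y z) = ∑' z, Q' z y) (y z : V) :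
    Sfun E Q' y z = Q' y z :=
  le_antisymm (Sfun_le E Q' y z)
    (tsub_eq_zero_iff_le.1 (Rfun_eq_zero E Q' hloop hsupp hmass hdiv y z))

end Part4
theorem stmt7 {V : Type*} [Countable V] [DecidableEq V] (E : V → V → Prop)
    (hloop : ∀ y, ¬ E y y)
    (Q : V → V → ℝ)
    (hnonneg : ∀ y z, 0 ≤ Q y z)
    (hzero : ∀ y z, ¬ E y z → Q y z = 0)
    (hsum : Summable (fun p : V × V => Q p.1 p.2))
    (hdiv : ∀ y, ∑' z, Q y z = ∑' z, Q z y) :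
    ∃ w : {l : List V // IsSACycle E l} → ℝ,
      (∀ c, 0 ≤ w c) ∧
      ∀ y z, E y z →
        HasSum
          (fun c : {l : List V // IsSACycle E l} =>
            if (y, z) ∈ (c : List V).zip ((c : List V).rotate 1) then w c else 0)
          (Q y z) := by
  set Q' : V → V → ℝ≥0∞ := fun y z => ENNReal.ofReal (Q y z) with hQ'
  have hmass : (∑' p : V × V, Q' p.1 p.2) ≠ ⊤ := by
    have : (∑' p : V × V, Q' p.1 p.2) = ENNReal.ofReal (∑' p : V × V, Q p.1 p.2) :=
      (ENNReal.ofReal_tsum_of_nonneg (fun p : V × V => hnonneg p.1 p.2) hsum).symm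
    rw [this]
    exact ENNReal.ofReal_ne_top
  have hrowsum : ∀ y, Summable fun z => Q y z := fun y =>
    hsum.comp_injective (i := fun z => (y, z)) (fun a b h => by simpa using h)
  have hcolsum : ∀ y, Summable fun z => Q z y := fun y =>
    hsum.comp_injective (i := fun z => (z, y)) (fun a b h => by simpa using h)
  have hdiv' : ∀ y, (∑' z, Q' y z) = ∑' z, Q' z y := by
    intro y
    have h1 : (∑' z, Q' y z) = ENNReal.ofReal (∑' z, Q y z) :=
      (ENNReal.ofReal_tsum_of_nonneg (fun z => hnonneg y z) (hrowsum y)).symm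
    have h2 : (∑' z, Q' z y) = ENNReal.ofReal (∑' z, Q z y) :=
      (ENNReal.ofReal_tsum_of_nonneg (fun z => hnonneg z y) (hcolsum y)).symm
    rw [h1, h2, hdiv y]
  have hsupp' : ∀ y z, ¬ E y z → Q' y z = 0 := fun y z h => by
    simp [hQ', hzero y z h]
  have hQ'top : ∀ y z, Q' y z ≠ ⊤ := fun y z => ENNReal.ofReal_ne_top
  have hQ'E : ∀ y z, 0 < Q' y z → E y z := by
    intro y z h
    by_contra hE
    rw [hsupp' y z hE] at h
    exact lt_irrefl _ h
  rcases isEmpty_or_nonempty {l : List V // IsSACycle E l} with hempty | hNE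
  · refine ⟨fun _ => 0, fun c => le_rfl, fun y z hE => ?_⟩
    have hQ0 : Q y z = 0 := by
      by_contra hQne
      have hpos : 0 < Q' y z := by
        simp only [hQ', ENNReal.ofReal_pos]
        exact lt_of_le_of_ne (hnonneg y z) (Ne.symm hQne)
      have hne : y ≠ z := fun h => hloop y (h ▸ hE)
      obtain ⟨l, hlne, hlnd, _, hlpos⟩ := Stmt7Aux.extract Q' hmass hdiv' hpos hne
      exact hempty.false ⟨l, hlne, hlnd, fun p hp => hQ'E p.1 p.2 (hlpos p hp)⟩
    rw [hQ0]
    simpa using hasSum_empty (f := fun c : {l : List V // IsSACycle E l} =>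
      if (y, z) ∈ (c : List V).zip ((c : List V).rotate 1) then (0:ℝ) else 0)
  · -- main case
    set W : {l : List V // IsSACycle E l} → ℝ≥0∞ :=
      fun c => ∑' n, if Cn E Q' n = c then δn E Q' n else 0 with hW
    refine ⟨fun c => (W c).toReal, fun c => ENNReal.toReal_nonneg, fun y z hE => ?_⟩
    have key : (∑' c : {l : List V // IsSACycle E l},
        if (y, z) ∈ cpairs (c : List V) then W c else 0) = Q' y z := by
      have hrearr : ∀ c : {l : List V // IsSACycle E l},
          (if (y, z) ∈ cpairs (c : List V) then W c else 0)
            = ∑' n, (if c = Cn E Q' n then tn E Q' n y z else 0) := by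
        intro c
        by_cases hm : (y, z) ∈ cpairs (c : List V)
        · rw [if_pos hm, hW]
          refine tsum_congr fun n => ?_
          by_cases hcn : c = Cn E Q' n
          · subst hcn
            simp [tn, hm]
          · rw [if_neg (fun h => hcn h.symm), if_neg hcn]
        · rw [if_neg hm]
          refine ((ENNReal.summable.tsum_eq_zero_iff).2 fun n => ?_).symm
          by_cases hcn : c = Cn E Q' n
          · subst hcn
            simp [tn, hm]
          · simp [hcn]
      calc (∑' c : {l : List V // IsSACycle E l},
            if (y, z) ∈ cpairs (c : List V) then W c else 0)
          = ∑' c : {l : List V // IsSACycle E l}, ∑' n,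
              (if c = Cn E Q' n then tn E Q' n y z else 0) := tsum_congr hrearr
        _ = ∑' n, ∑' c : {l : List V // IsSACycle E l},
              (if c = Cn E Q' n then tn E Q' n y z else 0) := ENNReal.tsum_comm
        _ = ∑' n, tn E Q' n y z := tsum_congr fun n => tsum_ite_eq (Cn E Q' n) _
        _ = Sfun E Q' y z := rfl
        _ = Q' y z := Sfun_eq E Q' hloop hsupp' hmass hdiv' y z
    have hFtop : (∑' c : {l : List V // IsSACycle E l},
        if (y, z) ∈ cpairs (c : List V) then W c else 0) ≠ ⊤ := by
      rw [key]; exact hQ'top y z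
    have hhs := (ENNReal.summable_toReal hFtop).hasSum
    have htsum : (∑' c : {l : List V // IsSACycle E l},
        ((if (y, z) ∈ cpairs (c : List V) then W c else 0)).toReal)
        = Q y z := by
      rw [← ENNReal.tsum_toReal_eq, key, hQ', ENNReal.toReal_ofReal (hnonneg y z)]
      intro c
      refine ne_top_of_le_ne_top hFtop ?_
      exact ENNReal.le_tsum c
    rw [htsum] at hhs
    have hfeq : (fun c : {l : List V // IsSACycle E l} =>
        ((if (y, z) ∈ cpairs (c : List V) then W c else 0)).toReal)
        = fun c : {l : List V // IsSACycle E l} =>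
          if (y, z) ∈ (c : List V).zip ((c : List V).rotate 1) then (W c).toReal else 0 := by
      funext c
      change (if (y, z) ∈ (c : List V).zip ((c : List V).rotate 1) then W c else 0).toReal = _
      by_cases hm : (y, z) ∈ (c : List V).zip ((c : List V).rotate 1)
      · rw [if_pos hm, if_pos hm]
      · rw [if_neg hm, if_neg hm, ENNReal.toReal_zero]
    rw [hfeq] at hhs
    exact hhs
end

section
/- For the empirical measure and empirical flow of a continuous-time Markov chain on countable V, the pathwise continuity equation holds ℙ_x-almost surely: δ_y(X_T) - δ_y(X_0) + T · div Q_T(y) = 0 for every y ∈ V, where div Q_T(y) = Σ_z Q_T(y,z) - Σ_z Q_T(z,y). -/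
open MeasureTheory Filter Set Function

/-- Number of jumps of the path `f` from `y` to `z` during the time interval `(0, T]`. -/
noncomputable def jumpsIn {V : Type*} [TopologicalSpace V] (f : ℝ → V) (y z : V) (T : ℝ) : ℕ :=
  Set.ncard {t : ℝ | 0 < t ∧ t ≤ T ∧ Function.leftLim f t = y ∧ f t = z}

section aux
variable {V : Type*} [TopologicalSpace V] [DiscreteTopology V] [DecidableEq V] {f : ℝ → V}

lemma const_of_no_jump (hr : ∀ t, ContinuousWithinAt f (Ici t) t)
    (hl : ∀ t, Tendsto f (nhdsWithin t (Iio t)) (nhds (leftLim f t)))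
    {a b : ℝ} (hab : a ≤ b) (h : ∀ t, a < t → t ≤ b → leftLim f t = f t) :
    f b = f a := by
  have hc : ContinuousOn f (Icc a b) := by
    intro t ht
    rcases eq_or_lt_of_le ht.1 with rfl | hat
    · exact (hr _).mono Icc_subset_Ici_self
    · have hca : ContinuousAt f t := by
        have h2 : Tendsto f (nhdsWithin t (Iio t) ⊔ nhdsWithin t (Ici t)) (nhds (f t)) :=
          tendsto_sup.mpr ⟨(h t hat ht.2) ▸ hl t, hr t⟩
        rwa [nhdsLT_sup_nhdsGE] at h2
      exact hca.continuousWithinAt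
  have hpre := (isPreconnected_Icc (a := a) (b := b)).image f hc
  exact hpre.subsingleton (mem_image_of_mem f (right_mem_Icc.2 hab))
    (mem_image_of_mem f (left_mem_Icc.2 hab))

lemma leftLim_eq_of_const (hl : ∀ t, Tendsto f (nhdsWithin t (Iio t)) (nhds (leftLim f t)))
    {s t : ℝ} (hst : s < t) {c : V} (h : ∀ u, s ≤ u → u < t → f u = c) :
    leftLim f t = c := by
  have h1 : Tendsto f (nhdsWithin t (Iio t)) (nhds c) := by
    apply Tendsto.congr' _ tendsto_const_nhds
    filter_upwards [Ioo_mem_nhdsLT_of_mem ⟨hst, le_refl t⟩] with u hu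
    exact (h u hu.1.le hu.2).symm
  exact tendsto_nhds_unique (hl t) h1


lemma core_count (hr : ∀ t, ContinuousWithinAt f (Ici t) t)
    (hl : ∀ t, Tendsto f (nhdsWithin t (Iio t)) (nhds (leftLim f t))) :
    ∀ (S : Finset ℝ) (T : ℝ), 0 < T →
      (∀ t : ℝ, t ∈ S ↔ (0 < t ∧ t ≤ T ∧ leftLim f t ≠ f t)) → ∀ y : V,
      (if f T = y then (1:ℤ) else 0) + ((S.filter (fun t => leftLim f t = y)).card : ℤ)
        = (if f 0 = y then (1:ℤ) else 0) + ((S.filter (fun t => f t = y)).card : ℤ) := by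
  intro S
  induction S using Finset.strongInduction with
  | _ S IH =>
    intro T hT hS y
    rcases S.eq_empty_or_nonempty with rfl | hne
    · have h0 : f T = f 0 := const_of_no_jump hr hl hT.le (fun t ht hTt => by
        by_contra hj
        exact (Finset.notMem_empty t) ((hS t).2 ⟨ht, hTt, hj⟩))
      simp [h0]
    · set m := S.max' hne with hm
      have hmS : m ∈ S := S.max'_mem hne
      obtain ⟨hm0, hmT, hmj⟩ := (hS m).1 hmS
      set S' := S.erase m with hS'def
      have hS'ss : S' ⊂ S := Finset.erase_ssubset hmS
      set c := (insert (0:ℝ) S').max' (Finset.insert_nonempty _ _) with hc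
      have hc0 : (0:ℝ) ≤ c := Finset.le_max' _ 0 (Finset.mem_insert_self _ _)
      have hltm : ∀ t ∈ S', t < m := by
        intro t ht
        have htS := Finset.mem_of_mem_erase ht
        exact lt_of_le_of_ne (S.le_max' t htS) (Finset.ne_of_mem_erase ht)
      have hcm : c < m := by
        have hmem := Finset.max'_mem (insert (0:ℝ) S') (Finset.insert_nonempty _ _)
        rw [Finset.mem_insert] at hmem
        rcases hmem with h | h
        · rw [← hc] at h; rw [h]; exact hm0
        · exact hltm c h
      set T'' := (c + m) / 2 with hT''
      have hcT'' : c < T'' := by rw [hT'']; linarith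
      have hT''m : T'' < m := by rw [hT'']; linarith
      have hT''0 : 0 < T'' := lt_of_le_of_lt hc0 hcT''
      have hS'' : ∀ t : ℝ, t ∈ S' ↔ (0 < t ∧ t ≤ T'' ∧ leftLim f t ≠ f t) := by
        intro t
        constructor
        · intro ht
          obtain ⟨h1, h2, h3⟩ := (hS t).1 (Finset.mem_of_mem_erase ht)
          refine ⟨h1, ?_, h3⟩
          exact le_trans (Finset.le_max' _ t (Finset.mem_insert_of_mem ht)) hcT''.le
        · rintro ⟨h1, h2, h3⟩
          have htm : t < m := lt_of_le_of_lt h2 hT''m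
          exact Finset.mem_erase.2 ⟨htm.ne, (hS t).2 ⟨h1, le_trans h2 (le_trans hT''m.le hmT), h3⟩⟩
      have key := IH S' hS'ss T'' hT''0 hS'' y
      have hnoj : ∀ u, T'' ≤ u → u < m → f u = f T'' := by
        intro u hu1 hu2
        refine const_of_no_jump hr hl hu1 (fun t ht1 ht2 => ?_)
        by_contra hj
        have htm : t < m := lt_of_le_of_lt ht2 hu2
        have htS : t ∈ S := (hS t).2 ⟨lt_trans hT''0 ht1, le_trans htm.le hmT, hj⟩
        have htS' : t ∈ S' := Finset.mem_erase.2 ⟨htm.ne, htS⟩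
        have htc : t ≤ c := Finset.le_max' _ t (Finset.mem_insert_of_mem htS')
        linarith
      have hllm : leftLim f m = f T'' :=
        leftLim_eq_of_const hl hT''m (fun u hu1 hu2 => hnoj u hu1 hu2)
      have hfTm : f T = f m := by
        refine const_of_no_jump hr hl hmT (fun t ht1 ht2 => ?_)
        by_contra hj
        have htS : t ∈ S := (hS t).2 ⟨lt_trans hm0 ht1, ht2, hj⟩
        exact absurd (S.le_max' t htS) (not_le.2 ht1)
      have hins : S = insert m S' := (Finset.insert_erase hmS).symm
      have hmnot : m ∉ S' := Finset.notMem_erase m S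
      have h1 : (S.filter (fun t => leftLim f t = y)).card
          = (S'.filter (fun t => leftLim f t = y)).card + (if leftLim f m = y then 1 else 0) := by
        rw [hins, Finset.filter_insert]
        split_ifs with h
        · rw [Finset.card_insert_of_notMem (fun hmem => hmnot (Finset.mem_of_mem_filter _ hmem))]
        · simp
      have h2 : (S.filter (fun t => f t = y)).card
          = (S'.filter (fun t => f t = y)).card + (if f m = y then 1 else 0) := by
        rw [hins, Finset.filter_insert]
        split_ifs with h
        · rw [Finset.card_insert_of_notMem (fun hmem => hmnot (Finset.mem_of_mem_filter _ hmem))]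
        · simp
      rw [hfTm, h1, h2, hllm]
      push_cast
      split_ifs at key ⊢ <;> omega

lemma tsum_jumps_out (JF : Finset ℝ) (T : ℝ) (y : V)
    (hJmem : ∀ t : ℝ, t ∈ JF ↔ (0 < t ∧ t ≤ T ∧ leftLim f t ≠ f t)) :
    ∑' z : V, (jumpsIn f y z T : ℤ)
      = (jumpsIn f y y T : ℤ) + ((JF.filter (fun t => leftLim f t = y)).card : ℤ) := by
  classical
  have hzero : ∀ z ∉ insert y (JF.image f), (jumpsIn f y z T : ℤ) = 0 := by
    intro z hz
    rw [Finset.mem_insert, not_or] at hz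
    have hempty : {t : ℝ | 0 < t ∧ t ≤ T ∧ leftLim f t = y ∧ f t = z} = ∅ := by
      ext t
      simp only [mem_setOf_eq, mem_empty_iff_false, iff_false]
      rintro ⟨h1, h2, h3, h4⟩
      refine hz.2 (h4 ▸ Finset.mem_image_of_mem f ((hJmem t).2 ⟨h1, h2, ?_⟩))
      rw [h3, h4]; exact fun h => hz.1 h.symm
    simp [jumpsIn, hempty]
  rw [tsum_eq_sum hzero, ← Finset.add_sum_erase _ _ (Finset.mem_insert_self y _)]
  congr 1
  have hj : ∀ z, z ≠ y →
      (jumpsIn f y z T : ℤ) = ((JF.filter (fun t => leftLim f t = y ∧ f t = z)).card : ℤ) := by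
    intro z hzy
    have hset : {t : ℝ | 0 < t ∧ t ≤ T ∧ leftLim f t = y ∧ f t = z}
        = ↑(JF.filter (fun t => leftLim f t = y ∧ f t = z)) := by
      ext t
      simp only [Finset.coe_filter, mem_setOf_eq, hJmem]
      constructor
      · rintro ⟨h1, h2, h3, h4⟩
        exact ⟨⟨h1, h2, by rw [h3, h4]; exact fun h => hzy h.symm⟩, h3, h4⟩
      · rintro ⟨⟨h1, h2, _⟩, h3, h4⟩
        exact ⟨h1, h2, h3, h4⟩
    rw [jumpsIn, hset, Set.ncard_coe_finset]
  rw [Finset.sum_congr rfl (fun z hz => hj z (Finset.ne_of_mem_erase hz))]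
  rw [← Nat.cast_sum]
  congr 1
  have hmap : ∀ t ∈ JF.filter (fun t => leftLim f t = y),
      f t ∈ (insert y (JF.image f)).erase y := by
    intro t ht
    rw [Finset.mem_filter] at ht
    have hjump := ((hJmem t).1 ht.1).2.2
    refine Finset.mem_erase.2 ⟨?_, Finset.mem_insert_of_mem (Finset.mem_image_of_mem f ht.1)⟩
    intro h
    exact hjump (ht.2.trans h.symm)
  rw [Finset.card_eq_sum_card_fiberwise hmap]
  refine Finset.sum_congr rfl (fun z hz => ?_)
  rw [Finset.filter_filter]

lemma tsum_jumps_in (JF : Finset ℝ) (T : ℝ) (y : V)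
    (hJmem : ∀ t : ℝ, t ∈ JF ↔ (0 < t ∧ t ≤ T ∧ leftLim f t ≠ f t)) :
    ∑' z : V, (jumpsIn f z y T : ℤ)
      = (jumpsIn f y y T : ℤ) + ((JF.filter (fun t => f t = y)).card : ℤ) := by
  classical
  have hzero : ∀ z ∉ insert y (JF.image (leftLim f)), (jumpsIn f z y T : ℤ) = 0 := by
    intro z hz
    rw [Finset.mem_insert, not_or] at hz
    have hempty : {t : ℝ | 0 < t ∧ t ≤ T ∧ leftLim f t = z ∧ f t = y} = ∅ := by
      ext t
      simp only [mem_setOf_eq, mem_empty_iff_false, iff_false]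
      rintro ⟨h1, h2, h3, h4⟩
      refine hz.2 (h3 ▸ Finset.mem_image_of_mem (leftLim f) ((hJmem t).2 ⟨h1, h2, ?_⟩))
      rw [h3, h4]; exact fun h => hz.1 h
    simp [jumpsIn, hempty]
  rw [tsum_eq_sum hzero, ← Finset.add_sum_erase _ _ (Finset.mem_insert_self y _)]
  congr 1
  have hj : ∀ z, z ≠ y →
      (jumpsIn f z y T : ℤ) = ((JF.filter (fun t => leftLim f t = z ∧ f t = y)).card : ℤ) := by
    intro z hzy
    have hset : {t : ℝ | 0 < t ∧ t ≤ T ∧ leftLim f t = z ∧ f t = y}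
        = ↑(JF.filter (fun t => leftLim f t = z ∧ f t = y)) := by
      ext t
      simp only [Finset.coe_filter, mem_setOf_eq, hJmem]
      constructor
      · rintro ⟨h1, h2, h3, h4⟩
        exact ⟨⟨h1, h2, by rw [h3, h4]; exact hzy⟩, h3, h4⟩
      · rintro ⟨⟨h1, h2, _⟩, h3, h4⟩
        exact ⟨h1, h2, h3, h4⟩
    rw [jumpsIn, hset, Set.ncard_coe_finset]
  rw [Finset.sum_congr rfl (fun z hz => hj z (Finset.ne_of_mem_erase hz))]
  rw [← Nat.cast_sum]
  congr 1
  have hmap : ∀ t ∈ JF.filter (fun t => f t = y),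
      leftLim f t ∈ (insert y (JF.image (leftLim f))).erase y := by
    intro t ht
    rw [Finset.mem_filter] at ht
    have hjump := ((hJmem t).1 ht.1).2.2
    refine Finset.mem_erase.2 ⟨?_, Finset.mem_insert_of_mem (Finset.mem_image_of_mem (leftLim f) ht.1)⟩
    intro h
    exact hjump (h.trans ht.2.symm)
  rw [Finset.card_eq_sum_card_fiberwise hmap]
  refine Finset.sum_congr rfl (fun z hz => ?_)
  rw [Finset.filter_filter]
  congr 1
  ext t
  simp only [Finset.mem_filter]
  tauto

end aux

/-- Pathwise continuity equation: `ℙ_x`-a.s., for every vertex `y`,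
`δ_y(X_T) − δ_y(X_0) + T·div Q_T(y) = 0`, equivalently
`δ_y(X_T) + Σ_z (# jumps y→z) = δ_y(X_0) + Σ_z (# jumps z→y)` on `(0,T]`. -/
theorem stmt14 {V : Type*} [Countable V] [DecidableEq V]
    [TopologicalSpace V] [DiscreteTopology V]
    [MeasurableSpace V] [MeasurableSingletonClass V]
    {Ω : Type*} [mΩ : MeasurableSpace Ω]
    (X : ℝ → Ω → V)
    (P : V → Measure Ω) (hprob : ∀ x, IsProbabilityMeasure (P x))
    (hcadlag : ∀ x, ∀ᵐ ω ∂ P x,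
      (∀ t, ContinuousWithinAt (fun s => X s ω) (Set.Ici t) t) ∧
      (∀ t, Tendsto (fun s => X s ω) (nhdsWithin t (Set.Iio t))
        (nhds (Function.leftLim (fun s => X s ω) t))))
    (hnonexpl : ∀ x (T : ℝ), ∀ᵐ ω ∂ P x,
      {t : ℝ | 0 < t ∧ t ≤ T ∧ Function.leftLim (fun s => X s ω) t ≠ X t ω}.Finite)
    (x : V) (T : ℝ) (hT : 0 < T) :
    ∀ᵐ ω ∂ P x, ∀ y : V,
      (if X T ω = y then (1:ℤ) else 0)
        + ∑' z : V, (jumpsIn (fun s => X s ω) y z T : ℤ)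
      = (if X 0 ω = y then (1:ℤ) else 0)
        + ∑' z : V, (jumpsIn (fun s => X s ω) z y T : ℤ) := by
  filter_upwards [hcadlag x, hnonexpl x T] with ω hcad hfin
  obtain ⟨hr, hl⟩ := hcad
  intro y
  classical
  set f : ℝ → V := fun s => X s ω with hf
  set JF := hfin.toFinset with hJF
  have hJmem : ∀ t : ℝ, t ∈ JF ↔ (0 < t ∧ t ≤ T ∧ leftLim f t ≠ f t) := by
    intro t
    rw [hJF, Set.Finite.mem_toFinset]
    exact Iff.rfl
  have hout := tsum_jumps_out (f := f) JF T y hJmem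
  have hin := tsum_jumps_in (f := f) JF T y hJmem
  have hcore := core_count hr hl JF T hT hJmem y
  have hT' : f T = X T ω := rfl
  have h0' : f 0 = X 0 ω := rfl
  rw [hout, hin, ← hT', ← h0']
  omega
end
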